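/- arXiv:0907.2470 — 5 statements merged into one kernel-verified Lean document; each statement's English description precedes it below -/
import Mathlib

section
/- For all α, β ∈ X and all n ≥ 0, L_n(α # β) = L_n(α) · L_n(β) in Γ_Q. -/
open scoped BigOperators

noncomputable section

attribute [local instance] Classical.propDecidable

/-- `I`: the set of dyadic rationals in `[0,1]`. -/
def dyadicI : Set ℚ := {t | 0 ≤ t ∧ t ≤ 1 ∧ ∃ i n : ℕ, t = (i : ℚ) / 2 ^ n}

/-- `X` is the ℚ-vector space of functions `I → ℚ`. -/
abbrev X : Type := dyadicI → ℚ

lemma dyadicI_mem {i n : ℕ} (h : i ≤ 2 ^ n) : (i : ℚ) / 2 ^ n ∈ dyadicI := by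
  refine ⟨by positivity, ?_, i, n, rfl⟩
  rw [div_le_one (by positivity)]
  exact_mod_cast h

lemma zero_mem_dyadicI : (0 : ℚ) ∈ dyadicI := by
  simpa using dyadicI_mem (i := 0) (n := 0) (by norm_num)

lemma one_mem_dyadicI : (1 : ℚ) ∈ dyadicI := by
  simpa using dyadicI_mem (i := 1) (n := 0) (by norm_num)

lemma half_mem_dyadicI : (1 / 2 : ℚ) ∈ dyadicI := by
  have := dyadicI_mem (i := 1) (n := 1) (by norm_num)
  norm_num at this ⊢
  exact this

/-- Evaluation of `α : X` at a rational, extended by `0` off `I`. -/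
def evI (α : X) (t : ℚ) : ℚ := if h : t ∈ dyadicI then α ⟨t, h⟩ else 0

/-- The map `T₀ : X → X`, `(T₀ α)(t) = α (t/2)`. -/
def T0 (α : X) : X := fun t => evI α (t.1 / 2)

/-- The map `T₁ : X → X`, `(T₁ α)(t) = α ((1+t)/2)`. -/
def T1 (α : X) : X := fun t => evI α ((1 + t.1) / 2)

/-- Auxiliary recursion (on the exponent of the denominator) defining `α # β`. -/
def hashAux : ℕ → X → X → ℚ → ℚ
  | 0, α, β, t =>
      if t = 0 then 0 else (evI α 1 - evI α 0) * (evI β 1 - evI β 0)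
  | n + 1, α, β, t =>
      if t ≤ 1 / 2 then
        hashAux n (T0 α) (T0 β) (2 * t) + hashAux n (T1 α) (T1 β) (2 * t)
      else
        hashAux n (T0 α) (T0 β) 1 + hashAux n (T1 α) (T1 β) 1 +
          hashAux n (T0 α) (T1 β) (2 * t - 1) + hashAux n (T1 α) (T0 β) (2 * t - 1)

/-- The product `α # β` on `X`. -/
def hash (α β : X) : X := fun t => hashAux (padicValNat 2 t.1.den) α β t.1

/-- The element `t ↦ t` of `X`. -/
def tId : X := fun t => t.1

/-- The element `ε : t ↦ t − t²` of `X`. -/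
def epsX : X := fun t => t.1 - t.1 ^ 2

/-- The constant function `1` in `X`. -/
def oneX : X := fun _ => (1 : ℚ)

/-- Convexity: `2α(i/q) ≥ α((i−1)/q) + α((i+1)/q)` for all powers of two `q = 2^n`, `0 < i < q`. -/
def ConvexX (α : X) : Prop :=
  ∀ n i : ℕ, 0 < i → i < 2 ^ n →
    evI α (((i : ℚ) - 1) / 2 ^ n) + evI α (((i : ℚ) + 1) / 2 ^ n)
      ≤ 2 * evI α ((i : ℚ) / 2 ^ n)

/-- `α` is Lipschitz with constant `m`. -/
def LipschitzQ (m : ℚ) (α : X) : Prop :=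
  ∀ s t : dyadicI, |α s - α t| ≤ m * |s.1 - t.1|

/-- The point `2^{-n}` of `I`. -/
def invPow (n : ℕ) : dyadicI :=
  ⟨1 / 2 ^ n, by simpa using dyadicI_mem (i := 1) (n := n) Nat.one_le_two_pow⟩

/-- `μ` is the Hilbert–Kunz multiplicity of `α`, i.e. `μ = lim 2^n α(2^{-n})`. -/
def IsHKmu (α : X) (μ : ℝ) : Prop :=
  Filter.Tendsto (fun n : ℕ => ((2 ^ n * α (invPow n) : ℚ) : ℝ)) Filter.atTop (nhds μ)

/-- The series `S_α = Σ α(2^{-n}) (2w)^n = Σ (2^n α(2^{-n})) w^n`. -/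
def hkSeries (α : X) : PowerSeries ℚ := PowerSeries.mk fun n => 2 ^ n * α (invPow n)

/-- Auxiliary recursion defining the functions `φ_m`. -/
def phiAux : ℕ → ℕ → ℚ → ℚ
  | 0, _, _ => 0
  | n + 1, m, t =>
      if t ≤ 1 / 2 then
        if m % 2 = 0 then (phiAux n (m + 1) (2 * t) + (8 * (m : ℚ) + 6) * t) / 8
        else (phiAux n (m - 1) (2 * t) + ((2 * t) - (2 * t) ^ 2) + (8 * (m : ℚ) + 6) * t) / 8
      else
        if m = 0 then (phiAux n 0 (2 * t - 1) + 6 * (1 - t)) / 8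
        else if m % 2 = 0 then
          (phiAux n (m - 1) (2 * t - 1) + ((2 * t - 1) - (2 * t - 1) ^ 2)
            + (8 * (m : ℚ) + 6) * (1 - t)) / 8
        else (phiAux n (m + 1) (2 * t - 1) + (8 * (m : ℚ) + 6) * (1 - t)) / 8

/-- The functions `φ_m ∈ X` of Definition 2.2. -/
def phiM (m : ℕ) : X := fun t => phiAux (padicValNat 2 t.1.den) m t.1

/-- `ℕ` with the Nim-sum (bitwise XOR) as its (commutative) monoid operation. -/
def NimNat : Type := ℕ

instance : CommMonoid NimNat where
  mul a b := Nat.xor a b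
  one := (0 : ℕ)
  mul_assoc := Nat.xor_assoc
  mul_comm := Nat.xor_comm
  one_mul := Nat.zero_xor
  mul_one := Nat.xor_zero

/-- The ring `Γ`: free `ℤ`-module on `λ₀, λ₁, …` with `λᵢλⱼ = λ_{i XOR j}`. -/
abbrev GammaZ : Type := MonoidAlgebra ℤ NimNat

/-- The ring `Γ_Q = Γ ⊗ ℚ`. -/
abbrev GammaQ : Type := MonoidAlgebra ℚ NimNat

/-- The basis element `λᵢ` of `Γ`. -/
def lamZ (i : ℕ) : GammaZ := MonoidAlgebra.single (show NimNat from i) 1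

/-- The basis element `λᵢ` of `Γ_Q`. -/
def lamQ (i : ℕ) : GammaQ := MonoidAlgebra.single (show NimNat from i) 1

/-- `δ_r = λ₀ − λ₁ + ⋯ + (−1)^{r−1} λ_{r−1}` in `Γ`. -/
def deltaZ (r : ℕ) : GammaZ := ∑ i ∈ Finset.range r, ((-1 : ℤ) ^ i) • lamZ i

/-- `δ_r` in `Γ_Q`. -/
def deltaQ (r : ℕ) : GammaQ := ∑ i ∈ Finset.range r, ((-1 : ℚ) ^ i) • lamQ i

/-- `L_n(α) = Σ_{i=0}^{2^n−1} (α((i+1)/2^n) − α(i/2^n)) (−1)^i λᵢ ∈ Γ_Q`. -/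
def Ln (n : ℕ) (α : X) : GammaQ :=
  ∑ i ∈ Finset.range (2 ^ n),
    ((-1 : ℚ) ^ i * (evI α (((i : ℚ) + 1) / 2 ^ n) - evI α ((i : ℚ) / 2 ^ n))) • lamQ i

/-- The Hilbert–Kunz function `φ_f ∈ X` of a power series `f`:
`φ_f(i/q) = q^{-r} · dim_F F[[u₁,…,u_r]]/(u₁^q,…,u_r^q,f^i)`. -/
def phiF {F : Type} [Field F] {σ : Type} (f : MvPowerSeries σ F) : X := fun t =>
  ((Module.finrank F
      (MvPowerSeries σ F ⧸ Ideal.span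
        (Set.range (fun j : σ => (MvPowerSeries.X j : MvPowerSeries σ F) ^ t.1.den)
          ∪ {f ^ t.1.num.toNat}))) : ℚ)
    / (t.1.den : ℚ) ^ (Nat.card σ)

/-- The natural inclusion `F[[u_j : j ∈ σ]] → F[[u_j : j ∈ τ]]` along an injection `e : σ → τ`. -/
def embPS {F : Type} [Field F] {σ τ : Type} (e : σ → τ) (f : MvPowerSeries σ F) :
    MvPowerSeries τ F := fun d =>
  if h : ∃ d' : σ →₀ ℕ, Finsupp.mapDomain e d' = d then
    MvPowerSeries.coeff h.choose f
  else 0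


section Statement2Aux

lemma evI_T0' (α : X) {t : ℚ} (h : t ∈ dyadicI) : evI (T0 α) t = evI α (t / 2) := by
  rw [evI, dif_pos h]; rfl

lemma evI_T1' (α : X) {t : ℚ} (h : t ∈ dyadicI) : evI (T1 α) t = evI α ((1 + t) / 2) := by
  rw [evI, dif_pos h]; rfl

/-- The `i`-th difference of `α` at level `n`. -/
def Dn (n : ℕ) (α : X) (i : ℕ) : ℚ :=
  evI α (((i : ℚ) + 1) / 2 ^ n) - evI α ((i : ℚ) / 2 ^ n)

lemma mem_of_le {i n : ℕ} (h : i ≤ 2 ^ n) : ((i : ℚ)) / 2 ^ n ∈ dyadicI := dyadicI_mem h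

lemma mem_succ_of_lt {i n : ℕ} (h : i < 2 ^ n) : ((i : ℚ) + 1) / 2 ^ n ∈ dyadicI := by
  have := dyadicI_mem (i := i + 1) (n := n) h
  push_cast at this
  exact this

lemma Dn_T0 (α : X) {n i : ℕ} (h : i < 2 ^ n) : Dn n (T0 α) i = Dn (n + 1) α i := by
  rw [Dn, Dn, evI_T0' α (mem_succ_of_lt h), evI_T0' α (mem_of_le h.le)]
  rw [div_div, div_div, ← pow_succ]

lemma Dn_T1 (α : X) {n i : ℕ} (h : i < 2 ^ n) : Dn n (T1 α) i = Dn (n + 1) α (2 ^ n + i) := by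
  rw [Dn, Dn, evI_T1' α (mem_succ_of_lt h), evI_T1' α (mem_of_le h.le)]
  have h2 : (2 : ℚ) ^ n ≠ 0 := by positivity
  have e1 : (1 + ((i : ℚ) + 1) / 2 ^ n) / 2 = (((2 ^ n + i : ℕ) : ℚ) + 1) / 2 ^ (n + 1) := by
    push_cast
    rw [pow_succ]
    field_simp
    ring
  have e2 : (1 + (i : ℚ) / 2 ^ n) / 2 = ((2 ^ n + i : ℕ) : ℚ) / 2 ^ (n + 1) := by
    push_cast
    rw [pow_succ]
    field_simp
  rw [e1, e2]

lemma hashAux_zero (n : ℕ) (α β : X) : hashAux n α β 0 = 0 := by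
  induction n generalizing α β with
  | zero => simp [hashAux]
  | succ n ih => norm_num [hashAux, ih]

lemma hashAux_succ_def (n : ℕ) (α β : X) (t : ℚ) :
    hashAux (n + 1) α β t =
      if t ≤ 1 / 2 then
        hashAux n (T0 α) (T0 β) (2 * t) + hashAux n (T1 α) (T1 β) (2 * t)
      else
        hashAux n (T0 α) (T0 β) 1 + hashAux n (T1 α) (T1 β) 1 +
          hashAux n (T0 α) (T1 β) (2 * t - 1) + hashAux n (T1 α) (T0 β) (2 * t - 1) := rfl

lemma hashAux_zero_def (α β : X) (t : ℚ) :
    hashAux 0 α β t =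
      if t = 0 then 0 else (evI α 1 - evI α 0) * (evI β 1 - evI β 0) := rfl

lemma hashAux_succ (n : ℕ) (α β : X) (k : ℕ) (hk : k ≤ 2 ^ n) :
    hashAux (n + 1) α β ((k : ℚ) / 2 ^ n) = hashAux n α β ((k : ℚ) / 2 ^ n) := by
  induction n generalizing α β k with
  | zero =>
    interval_cases k
    · norm_num [hashAux_succ_def, hashAux_zero_def, hashAux_zero]
    · rw [hashAux_succ_def]
      rw [if_neg (by norm_num)]
      simp only [hashAux_zero_def]
      norm_num
      rw [evI_T0' α one_mem_dyadicI, evI_T0' α zero_mem_dyadicI,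
        evI_T0' β one_mem_dyadicI, evI_T0' β zero_mem_dyadicI,
        evI_T1' α one_mem_dyadicI, evI_T1' α zero_mem_dyadicI,
        evI_T1' β one_mem_dyadicI, evI_T1' β zero_mem_dyadicI]
      norm_num
      ring
  | succ n ih =>
    have hpn : (0 : ℚ) < 2 ^ n := by positivity
    by_cases hk2 : k ≤ 2 ^ n
    · have hk' : (k : ℚ) ≤ 2 ^ n := by exact_mod_cast hk2
      have ht : (k : ℚ) / 2 ^ (n + 1) ≤ 1 / 2 := by
        rw [pow_succ, div_le_div_iff₀ (by positivity) (by norm_num)]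
        nlinarith
      have h2t : 2 * ((k : ℚ) / 2 ^ (n + 1)) = (k : ℚ) / 2 ^ n := by
        rw [pow_succ]; field_simp
      conv_lhs => rw [hashAux_succ_def (n + 1) α β]
      conv_rhs => rw [hashAux_succ_def n α β]
      rw [if_pos ht, if_pos ht, h2t, ih _ _ _ hk2, ih _ _ _ hk2]
    · have hk2' : 2 ^ n < k := by omega
      have ht : ¬ ((k : ℚ) / 2 ^ (n + 1) ≤ 1 / 2) := by
        rw [not_le, pow_succ, div_lt_div_iff₀ (by norm_num) (by positivity)]
        have : (2 : ℚ) ^ n + 1 ≤ (k : ℚ) := by exact_mod_cast hk2'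
        nlinarith
      have h2t : 2 * ((k : ℚ) / 2 ^ (n + 1)) - 1 = ((k - 2 ^ n : ℕ) : ℚ) / 2 ^ n := by
        rw [Nat.cast_sub hk2'.le]
        push_cast
        rw [pow_succ]
        field_simp
      have h1 : (1 : ℚ) = ((2 ^ n : ℕ) : ℚ) / 2 ^ n := by
        push_cast; rw [div_self hpn.ne']
      conv_lhs => rw [hashAux_succ_def (n + 1) α β]
      conv_rhs => rw [hashAux_succ_def n α β]
      rw [if_neg ht, if_neg ht, h2t, h1,
        ih _ _ _ le_rfl, ih _ _ _ le_rfl, ih _ _ _ (by omega), ih _ _ _ (by omega)]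

lemma hashAux_eq_of_le {n m : ℕ} (hnm : n ≤ m) (α β : X) (k : ℕ) (hk : k ≤ 2 ^ n) :
    hashAux m α β ((k : ℚ) / 2 ^ n) = hashAux n α β ((k : ℚ) / 2 ^ n) := by
  induction m, hnm using Nat.le_induction with
  | base => rfl
  | succ m hm ih =>
    have hpowm : (2 : ℚ) ^ m = 2 ^ n * 2 ^ (m - n) := by
      rw [← pow_add]; congr 1; omega
    have key : (k : ℚ) / 2 ^ n = ((k * 2 ^ (m - n) : ℕ) : ℚ) / 2 ^ m := by
      push_cast
      rw [hpowm]
      field_simp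
    have hb : k * 2 ^ (m - n) ≤ 2 ^ m := by
      calc k * 2 ^ (m - n) ≤ 2 ^ n * 2 ^ (m - n) := Nat.mul_le_mul_right _ hk
        _ = 2 ^ m := by rw [← pow_add]; congr 1; omega
    rw [key, hashAux_succ _ _ _ _ hb, ← key, ih]

lemma hash_eval (α β : X) (n k : ℕ) (hk : k ≤ 2 ^ n) :
    evI (hash α β) ((k : ℚ) / 2 ^ n) = hashAux n α β ((k : ℚ) / 2 ^ n) := by
  have hmem := dyadicI_mem (i := k) (n := n) hk
  rw [evI, dif_pos hmem]
  show hashAux (padicValNat 2 ((k : ℚ) / 2 ^ n).den) α β ((k : ℚ) / 2 ^ n) = _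
  set t : ℚ := (k : ℚ) / 2 ^ n with htdef
  have hdvd : (t.den : ℤ) ∣ ((2 ^ n : ℕ) : ℤ) := by
    have h1 : t = Rat.divInt (k : ℤ) ((2 ^ n : ℕ) : ℤ) := by
      rw [Rat.divInt_eq_div]; push_cast [htdef]; norm_num
    rw [h1]
    exact Rat.den_dvd _ _
  have hdvd' : t.den ∣ 2 ^ n := by exact_mod_cast hdvd
  obtain ⟨v, hv, hden⟩ := (Nat.dvd_prime_pow Nat.prime_two).mp hdvd'
  have hval : padicValNat 2 t.den = v := by
    rw [hden, padicValNat.prime_pow]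
  have ht0 : 0 ≤ t := by positivity
  have ht1 : t ≤ 1 := hmem.2.1
  have hnum0 : 0 ≤ t.num := Rat.num_nonneg.mpr ht0
  set j : ℕ := t.num.toNat with hjdef
  have hjq : (j : ℚ) = (t.num : ℚ) := by
    rw [hjdef]; exact_mod_cast Int.toNat_of_nonneg hnum0
  have hdenq : ((t.den : ℚ)) = 2 ^ v := by rw [hden]; push_cast; ring
  have htj : t = (j : ℚ) / 2 ^ v := by
    rw [hjq, ← hdenq]
    exact (Rat.num_div_den t).symm
  have hj : j ≤ 2 ^ v := by
    have hle : (t.num : ℚ) ≤ (t.den : ℚ) := by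
      have := (div_le_one (by exact_mod_cast t.pos : (0:ℚ) < (t.den:ℚ))).mp
        (by rw [Rat.num_div_den t]; exact ht1)
      exact this
    have : t.num ≤ (t.den : ℤ) := by exact_mod_cast hle
    omega
  rw [hval, htj]
  exact (hashAux_eq_of_le hv α β j hj).symm


lemma two_pow_xor {n a : ℕ} (h : a < 2 ^ n) : 2 ^ n ^^^ a = 2 ^ n + a := by
  induction n generalizing a with
  | zero =>
    interval_cases a
    rfl
  | succ n ih =>
    have hdiv : (2 ^ (n + 1) ^^^ a) / 2 = 2 ^ n ^^^ a / 2 := by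
      rw [Nat.xor_div_two]
      congr 1
      omega
    have hmod : (2 ^ (n + 1) ^^^ a) % 2 = a % 2 := by
      have h2 : 2 ^ (n + 1) % 2 = 0 := by
        have : 2 ^ (n + 1) = 2 * 2 ^ n := by ring
        omega
      have := (Nat.xor_mod_two_eq_one (a := 2 ^ (n + 1)) (b := a))
      omega
    have hlow : a / 2 < 2 ^ n := by omega
    have := ih hlow
    omega

lemma xor_high1 {n i k : ℕ} (hi : i < 2 ^ n) (hk : k < 2 ^ n) :
    i ^^^ (2 ^ n + k) = 2 ^ n + (i ^^^ k) := by
  rw [← two_pow_xor hk, ← two_pow_xor (Nat.xor_lt_two_pow hi hk), ← Nat.xor_assoc,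
    Nat.xor_comm i, Nat.xor_assoc]

lemma xor_high2 {n i k : ℕ} (hi : i < 2 ^ n) (hk : k < 2 ^ n) :
    (2 ^ n + i) ^^^ (2 ^ n + k) = i ^^^ k := by
  rw [← two_pow_xor hi, ← two_pow_xor hk, Nat.xor_comm (2 ^ n) i, Nat.xor_assoc,
    Nat.xor_xor_cancel_left]

lemma hashAux_high (n : ℕ) (α β : X) {t : ℚ} (h : 1 / 2 ≤ t) :
    hashAux (n + 1) α β t =
      hashAux n (T0 α) (T0 β) 1 + hashAux n (T1 α) (T1 β) 1 +
        hashAux n (T0 α) (T1 β) (2 * t - 1) + hashAux n (T1 α) (T0 β) (2 * t - 1) := by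
  by_cases h' : t ≤ 1 / 2
  · have ht : t = 1 / 2 := le_antisymm h' h
    subst ht
    rw [hashAux_succ_def, if_pos le_rfl]
    norm_num [hashAux_zero]
  · rw [hashAux_succ_def, if_neg h']

/-- The key combinatorial identity. -/
lemma Dhash (n : ℕ) (α β : X) (k : ℕ) (hk : k < 2 ^ n) :
    hashAux n α β (((k : ℚ) + 1) / 2 ^ n) - hashAux n α β ((k : ℚ) / 2 ^ n)
      = ∑ i ∈ Finset.range (2 ^ n), Dn n α i * Dn n β (i ^^^ k) := by
  induction n generalizing α β k with
  | zero =>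
    have hk0 : k = 0 := by omega
    subst hk0
    norm_num [hashAux_zero_def, Dn]
  | succ n ih =>
    have hq : (0 : ℚ) < 2 ^ n := by positivity
    have hsplit : 2 ^ (n + 1) = 2 ^ n + 2 ^ n := by ring
    by_cases hk2 : k < 2 ^ n
    · -- low half
      have hkc : (k : ℚ) + 1 ≤ 2 ^ n := by exact_mod_cast hk2
      have hk1 : ((k : ℚ) + 1) / 2 ^ (n + 1) ≤ 1 / 2 := by
        rw [pow_succ, div_le_div_iff₀ (by positivity) (by norm_num)]
        nlinarith
      have hk0 : (k : ℚ) / 2 ^ (n + 1) ≤ 1 / 2 := by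
        rw [pow_succ, div_le_div_iff₀ (by positivity) (by norm_num)]
        nlinarith
      have e1 : 2 * (((k : ℚ) + 1) / 2 ^ (n + 1)) = ((k : ℚ) + 1) / 2 ^ n := by
        rw [pow_succ]; field_simp
      have e0 : 2 * ((k : ℚ) / 2 ^ (n + 1)) = (k : ℚ) / 2 ^ n := by
        rw [pow_succ]; field_simp
      rw [hashAux_succ_def n α β, hashAux_succ_def n α β, if_pos hk1, if_pos hk0, e1, e0]
      have S1 : ∑ i ∈ Finset.range (2 ^ n), Dn n (T0 α) i * Dn n (T0 β) (i ^^^ k)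
          = ∑ i ∈ Finset.range (2 ^ n), Dn (n + 1) α i * Dn (n + 1) β (i ^^^ k) := by
        refine Finset.sum_congr rfl fun i hi => ?_
        have hi' : i < 2 ^ n := Finset.mem_range.mp hi
        rw [Dn_T0 α hi', Dn_T0 β (Nat.xor_lt_two_pow hi' hk2)]
      have S2 : ∑ i ∈ Finset.range (2 ^ n), Dn n (T1 α) i * Dn n (T1 β) (i ^^^ k)
          = ∑ i ∈ Finset.range (2 ^ n), Dn (n + 1) α (2 ^ n + i) * Dn (n + 1) β ((2 ^ n + i) ^^^ k) := by
        refine Finset.sum_congr rfl fun i hi => ?_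
        have hi' : i < 2 ^ n := Finset.mem_range.mp hi
        have hx : (2 ^ n + i) ^^^ k = 2 ^ n + (i ^^^ k) := by
          rw [Nat.xor_comm, xor_high1 hk2 hi', Nat.xor_comm k i]
        rw [Dn_T1 α hi', hx, Dn_T1 β (Nat.xor_lt_two_pow hi' hk2)]
      rw [hsplit, Finset.sum_range_add, ← S1, ← S2, ← ih (T0 α) (T0 β) k hk2,
        ← ih (T1 α) (T1 β) k hk2]
      ring
    · -- high half
      obtain ⟨k', rfl⟩ : ∃ k', k = 2 ^ n + k' := ⟨k - 2 ^ n, by omega⟩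
      have hk' : k' < 2 ^ n := by
        have := hk; rw [hsplit] at this; omega
      have hkq : ((2 ^ n + k' : ℕ) : ℚ) = 2 ^ n + (k' : ℚ) := by push_cast; ring
      have hk'c : (k' : ℚ) < 2 ^ n := by exact_mod_cast hk'
      have ht1 : (1 : ℚ) / 2 ≤ (((2 ^ n + k' : ℕ) : ℚ) + 1) / 2 ^ (n + 1) := by
        rw [hkq, pow_succ, div_le_div_iff₀ (by norm_num) (by positivity)]
        have h0 : (0:ℚ) ≤ (k' : ℚ) := by positivity
        nlinarith
      have ht0 : (1 : ℚ) / 2 ≤ ((2 ^ n + k' : ℕ) : ℚ) / 2 ^ (n + 1) := by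
        rw [hkq, pow_succ, div_le_div_iff₀ (by norm_num) (by positivity)]
        have h0 : (0:ℚ) ≤ (k' : ℚ) := by positivity
        nlinarith
      have e1 : 2 * ((((2 ^ n + k' : ℕ) : ℚ) + 1) / 2 ^ (n + 1)) - 1 = ((k' : ℚ) + 1) / 2 ^ n := by
        rw [hkq, pow_succ]; field_simp; ring
      have e0 : 2 * (((2 ^ n + k' : ℕ) : ℚ) / 2 ^ (n + 1)) - 1 = (k' : ℚ) / 2 ^ n := by
        rw [hkq, pow_succ]; field_simp; ring
      rw [hashAux_high n α β ht1, hashAux_high n α β ht0, e1, e0]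
      have S1 : ∑ i ∈ Finset.range (2 ^ n), Dn n (T0 α) i * Dn n (T1 β) (i ^^^ k')
          = ∑ i ∈ Finset.range (2 ^ n), Dn (n + 1) α i * Dn (n + 1) β (i ^^^ (2 ^ n + k')) := by
        refine Finset.sum_congr rfl fun i hi => ?_
        have hi' : i < 2 ^ n := Finset.mem_range.mp hi
        rw [xor_high1 hi' hk', Dn_T0 α hi', Dn_T1 β (Nat.xor_lt_two_pow hi' hk')]
      have S2 : ∑ i ∈ Finset.range (2 ^ n), Dn n (T1 α) i * Dn n (T0 β) (i ^^^ k')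
          = ∑ i ∈ Finset.range (2 ^ n),
              Dn (n + 1) α (2 ^ n + i) * Dn (n + 1) β ((2 ^ n + i) ^^^ (2 ^ n + k')) := by
        refine Finset.sum_congr rfl fun i hi => ?_
        have hi' : i < 2 ^ n := Finset.mem_range.mp hi
        rw [xor_high2 hi' hk', Dn_T1 α hi', Dn_T0 β (Nat.xor_lt_two_pow hi' hk')]
      rw [hsplit, Finset.sum_range_add, ← S1, ← S2, ← ih (T0 α) (T1 β) k' hk',
        ← ih (T1 α) (T0 β) k' hk']
      ring

lemma lamQ_mul (i j : ℕ) : lamQ i * lamQ j = lamQ (i ^^^ j) := by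
  rw [lamQ, lamQ, lamQ, MonoidAlgebra.single_mul_single, one_mul]
  rfl

lemma sign_xor (i k : ℕ) : ((-1 : ℚ)) ^ (i ^^^ k) = (-1) ^ i * (-1) ^ k := by
  rcases Nat.even_or_odd i with hi | hi <;> rcases Nat.even_or_odd k with hk | hk
  · have hx : Even (i ^^^ k) := Nat.even_xor.mpr (iff_of_true hi hk)
    rw [hx.neg_one_pow, hi.neg_one_pow, hk.neg_one_pow]; ring
  · have hx : ¬ Even (i ^^^ k) := by
      rw [Nat.even_xor]
      simp [hi, Nat.not_even_iff_odd.mpr hk]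
    rw [(Nat.not_even_iff_odd.mp hx).neg_one_pow, hi.neg_one_pow, hk.neg_one_pow]; ring
  · have hx : ¬ Even (i ^^^ k) := by
      rw [Nat.even_xor]
      simp [hk, Nat.not_even_iff_odd.mpr hi]
    rw [(Nat.not_even_iff_odd.mp hx).neg_one_pow, hi.neg_one_pow, hk.neg_one_pow]; ring
  · have hx : Even (i ^^^ k) := by
      rw [Nat.even_xor]
      simp [Nat.not_even_iff_odd.mpr hi, Nat.not_even_iff_odd.mpr hk]
    rw [hx.neg_one_pow, hi.neg_one_pow, hk.neg_one_pow]; ring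

lemma sum_xor_reindex {M : Type*} [AddCommMonoid M] (n i : ℕ) (hi : i < 2 ^ n) (f : ℕ → M) :
    ∑ j ∈ Finset.range (2 ^ n), f j = ∑ k ∈ Finset.range (2 ^ n), f (i ^^^ k) := by
  refine Finset.sum_nbij' (fun j => i ^^^ j) (fun k => i ^^^ k) ?_ ?_ ?_ ?_ ?_
  · intro a ha
    exact Finset.mem_range.mpr (Nat.xor_lt_two_pow hi (Finset.mem_range.mp ha))
  · intro a ha
    exact Finset.mem_range.mpr (Nat.xor_lt_two_pow hi (Finset.mem_range.mp ha))
  · intro a _; exact Nat.xor_xor_cancel_left i a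
  · intro a _; exact Nat.xor_xor_cancel_left i a
  · intro a _; rw [Nat.xor_xor_cancel_left]

end Statement2Aux

/-- Theorem 1.8: `L_n(α # β) = L_n(α) · L_n(β)` in `Γ_Q`. -/
theorem statement2 (α β : X) (n : ℕ) :
    Ln n (hash α β) = Ln n α * Ln n β := by
  classical
  have LnD : ∀ γ : X, Ln n γ =
      ∑ i ∈ Finset.range (2 ^ n), ((-1 : ℚ) ^ i * Dn n γ i) • lamQ i := fun γ => rfl
  have key : ∀ k ∈ Finset.range (2 ^ n),
      Dn n (hash α β) k = ∑ i ∈ Finset.range (2 ^ n), Dn n α i * Dn n β (i ^^^ k) := by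
    intro k hk
    have hk' := Finset.mem_range.mp hk
    have h1 : ((k : ℚ) + 1) = ((k + 1 : ℕ) : ℚ) := by push_cast; ring
    rw [Dn, h1, hash_eval α β n (k + 1) hk', hash_eval α β n k hk'.le, ← h1,
      Dhash n α β k hk']
  have LHS : Ln n (hash α β) =
      ∑ k ∈ Finset.range (2 ^ n),
        ((-1 : ℚ) ^ k * ∑ i ∈ Finset.range (2 ^ n), Dn n α i * Dn n β (i ^^^ k)) • lamQ k := by
    rw [LnD]
    exact Finset.sum_congr rfl fun k hk => by rw [key k hk]
  rw [LHS, LnD α, LnD β, Finset.sum_mul_sum]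
  have RHS : ∀ i ∈ Finset.range (2 ^ n),
      ∑ j ∈ Finset.range (2 ^ n),
          (((-1 : ℚ) ^ i * Dn n α i) • lamQ i) * (((-1 : ℚ) ^ j * Dn n β j) • lamQ j)
        = ∑ k ∈ Finset.range (2 ^ n),
            (((-1 : ℚ) ^ i * Dn n α i) * ((-1 : ℚ) ^ (i ^^^ k) * Dn n β (i ^^^ k))) • lamQ k := by
    intro i hi
    rw [sum_xor_reindex n i (Finset.mem_range.mp hi)]
    refine Finset.sum_congr rfl fun k _ => ?_
    rw [smul_mul_smul_comm, lamQ_mul, Nat.xor_xor_cancel_left]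
  rw [Finset.sum_congr rfl RHS, Finset.sum_comm]
  refine Finset.sum_congr rfl fun k hk => ?_
  rw [← Finset.sum_smul]
  congr 1
  rw [Finset.mul_sum]
  refine Finset.sum_congr rfl fun i _ => ?_
  rw [sign_xor]
  rcases Nat.even_or_odd i with hi | hi
  · rw [hi.neg_one_pow]; ring
  · rw [hi.neg_one_pow]; ring
end
end

section
/- For α ∈ X the following are equivalent: (1) α is convex; (2) for each n ≥ 0, writing q = 2ⁿ and L_n(α) = Σ_{i=0}^{q−1} cᵢ(−1)ⁱλᵢ (so cᵢ = α((i+1)/q) − α(i/q)), one has c₀ ≥ c₁ ≥ ⋯ ≥ c_{q−1}; (3) for each n ≥ 0 with q = 2ⁿ, L_n(α) is a ℚ-linear combination of δ₁,…,δ_q in which the coefficients of δ₁,…,δ_{q−1} are all ≥ 0. -/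
open scoped BigOperators

noncomputable section

attribute [local instance] Classical.propDecidable

lemma aux_lamQ_coeff (q : ℕ) (a : ℕ → ℚ) (j : ℕ) (hj : j < q) :
    (∑ i ∈ Finset.range q, a i • lamQ i).coeff (show NimNat from j) = a j := by
  classical
  rw [MonoidAlgebra.coeff_sum, Finset.sum_apply']
  rw [Finset.sum_eq_single j]
  · rw [MonoidAlgebra.coeff_smul_apply, lamQ, MonoidAlgebra.coeff_single]
    erw [Finsupp.single_eq_same]; simp
  · intro b _ hb
    rw [MonoidAlgebra.coeff_smul_apply, lamQ, MonoidAlgebra.coeff_single]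
    erw [Finsupp.single_eq_of_ne (Ne.symm hb)]; simp
  · intro h; exact absurd (Finset.mem_range.2 hj) h

lemma aux_sum_smul_deltaQ (q : ℕ) (e : ℕ → ℚ) :
    ∑ r ∈ Finset.Icc 1 q, e r • deltaQ r
      = ∑ i ∈ Finset.range q, ((-1:ℚ)^i * ∑ r ∈ Finset.Icc (i+1) q, e r) • lamQ i := by
  unfold deltaQ
  simp_rw [Finset.smul_sum, smul_smul]
  rw [Finset.sum_comm' (s' := fun i => Finset.Icc (i+1) q) (t' := Finset.range q)
    (by intro r i; simp only [Finset.mem_Icc, Finset.mem_range]; omega)]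
  refine Finset.sum_congr rfl fun i _ => ?_
  rw [← Finset.sum_smul, ← Finset.sum_mul, mul_comm]

lemma aux_telescope (g : ℕ → ℚ) (i q : ℕ) (h : i < q) :
    ∑ r ∈ Finset.Icc (i+1) q, (g (r-1) - g r) = g i - g q := by
  rw [← Finset.Ico_add_one_right_eq_Icc, Finset.sum_Ico_eq_sum_range]
  have h1 : q + 1 - (i + 1) = q - i := by omega
  rw [h1]
  calc ∑ k ∈ Finset.range (q - i), (g (i + 1 + k - 1) - g (i + 1 + k))
      = ∑ k ∈ Finset.range (q - i), ((fun m => g (i + m)) k - (fun m => g (i + m)) (k+1)) := by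
        refine Finset.sum_congr rfl fun k _ => ?_
        simp only
        congr 2 <;> omega
    _ = (fun m => g (i + m)) 0 - (fun m => g (i + m)) (q - i) := Finset.sum_range_sub' _ _
    _ = g i - g q := by simp only; congr 2; omega

lemma aux_constructC (q : ℕ) (hq : 0 < q) (d : ℕ → ℚ)
    (hd : ∀ i, i + 1 < q → d (i+1) ≤ d i) :
    ∃ c : ℕ → ℚ,
      (∑ i ∈ Finset.range q, ((-1:ℚ)^i * d i) • lamQ i
        = ∑ r ∈ Finset.Icc 1 q, c r • deltaQ r) ∧
      ∀ r, 1 ≤ r → r ≤ q - 1 → 0 ≤ c r := by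
  classical
  set g : ℕ → ℚ := fun r => if r = q then 0 else d r with hg
  refine ⟨fun r => g (r-1) - g r, ?_, ?_⟩
  · rw [aux_sum_smul_deltaQ]
    refine Finset.sum_congr rfl fun i hi => ?_
    rw [Finset.mem_range] at hi
    rw [aux_telescope g i q hi]
    have hgi : g i - g q = d i := by simp [hg, Nat.ne_of_lt hi]
    rw [hgi]
  · intro r h1 h2
    have hrq : r < q := by omega
    have h1q : r - 1 ≠ q := by omega
    have he : g (r-1) - g r = d (r-1) - d r := by
      simp [hg, h1q, Nat.ne_of_lt hrq]
    simp only
    rw [he]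
    have hd' := hd (r-1) (by omega)
    have hr1 : r - 1 + 1 = r := by omega
    rw [hr1] at hd'
    linarith

lemma aux_extractMono (q : ℕ) (d c : ℕ → ℚ)
    (h : ∑ i ∈ Finset.range q, ((-1:ℚ)^i * d i) • lamQ i
        = ∑ r ∈ Finset.Icc 1 q, c r • deltaQ r)
    (hc : ∀ r, 1 ≤ r → r ≤ q - 1 → 0 ≤ c r) :
    ∀ i, i + 1 < q → d (i+1) ≤ d i := by
  intro i hi
  rw [aux_sum_smul_deltaQ] at h
  have key : ∀ j, j < q → d j = ∑ r ∈ Finset.Icc (j+1) q, c r := by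
    intro j hj
    have hj' := congrArg (fun x : GammaQ => x.coeff (show NimNat from j)) h
    simp only at hj'
    rw [aux_lamQ_coeff q _ j hj, aux_lamQ_coeff q _ j hj] at hj'
    exact mul_left_cancel₀ (pow_ne_zero j (by norm_num)) hj'
  have hsplit : Finset.Icc (i+1) q = insert (i+1) (Finset.Icc (i+2) q) := by
    ext x; simp only [Finset.mem_Icc, Finset.mem_insert]; omega
  have hni : (i+1) ∉ Finset.Icc (i+2) q := by
    simp only [Finset.mem_Icc]; omega
  have e1 := key i (by omega)
  have e2 := key (i+1) hi
  rw [hsplit, Finset.sum_insert hni] at e1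
  have hcc := hc (i+1) (by omega) (by omega)
  linarith

/-- Lemma 1.11: for `α ∈ X` the following are equivalent: (1) `α` is convex;
(2) for each `n`, the coefficients `cᵢ = α((i+1)/q) − α(i/q)` of `L_n(α)` satisfy
`c₀ ≥ c₁ ≥ ⋯ ≥ c_{q−1}`; (3) for each `n`, `L_n(α)` is a linear combination of
`δ₁, …, δ_q` where the coefficients of `δ₁, …, δ_{q−1}` are `≥ 0`. -/
theorem statement5 (α : X) :
    (ConvexX α ↔ ∀ n i : ℕ, i + 1 < 2 ^ n →
        evI α (((i : ℚ) + 2) / 2 ^ n) - evI α (((i : ℚ) + 1) / 2 ^ n)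
          ≤ evI α (((i : ℚ) + 1) / 2 ^ n) - evI α ((i : ℚ) / 2 ^ n)) ∧
    (ConvexX α ↔ ∀ n : ℕ, ∃ c : ℕ → ℚ,
        Ln n α = ∑ r ∈ Finset.Icc 1 (2 ^ n), c r • deltaQ r ∧
        ∀ r : ℕ, 1 ≤ r → r ≤ 2 ^ n - 1 → 0 ≤ c r) := by
  have hA : ConvexX α ↔ ∀ n i : ℕ, i + 1 < 2 ^ n →
      evI α (((i : ℚ) + 2) / 2 ^ n) - evI α (((i : ℚ) + 1) / 2 ^ n)
        ≤ evI α (((i : ℚ) + 1) / 2 ^ n) - evI α ((i : ℚ) / 2 ^ n) := by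
    constructor
    · intro h n i hi
      have h2 := h n (i+1) (Nat.succ_pos i) hi
      have e1 : (((i+1 : ℕ)) : ℚ) = (i:ℚ) + 1 := by push_cast; ring
      rw [e1] at h2
      have e2 : ((i:ℚ) + 1 - 1) = (i:ℚ) := by ring
      have e3 : ((i:ℚ) + 1 + 1) = (i:ℚ) + 2 := by ring
      rw [e2, e3] at h2
      linarith
    · intro h n i hi0 hiq
      obtain ⟨j, rfl⟩ : ∃ j, i = j + 1 := ⟨i - 1, by omega⟩
      have h2 := h n j (by omega)
      have e1 : (((j+1 : ℕ)) : ℚ) = (j:ℚ) + 1 := by push_cast; ring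
      rw [e1]
      have e2 : ((j:ℚ) + 1 - 1) = (j:ℚ) := by ring
      have e3 : ((j:ℚ) + 1 + 1) = (j:ℚ) + 2 := by ring
      rw [e2, e3]
      linarith
  refine ⟨hA, hA.trans ?_⟩
  constructor
  · intro h2 n
    have hd : ∀ i : ℕ, i + 1 < 2^n →
        (fun i : ℕ => evI α (((i:ℚ)+1)/2^n) - evI α ((i:ℚ)/2^n)) (i+1)
          ≤ (fun i : ℕ => evI α (((i:ℚ)+1)/2^n) - evI α ((i:ℚ)/2^n)) i := by
      intro i hi
      simp only
      have e1 : (((i+1 : ℕ)) : ℚ) = (i:ℚ) + 1 := by push_cast; ring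
      rw [e1]
      have e3 : ((i:ℚ) + 1 + 1) = (i:ℚ) + 2 := by ring
      rw [e3]
      exact h2 n i hi
    obtain ⟨c, hc1, hc2⟩ := aux_constructC (2^n) (by positivity)
      (fun i : ℕ => evI α (((i:ℚ)+1)/2^n) - evI α ((i:ℚ)/2^n)) hd
    exact ⟨c, hc1, hc2⟩
  · intro h3 n i hi
    obtain ⟨c, hc1, hc2⟩ := h3 n
    have hm := aux_extractMono (2^n)
      (fun i : ℕ => evI α (((i:ℚ)+1)/2^n) - evI α ((i:ℚ)/2^n)) c hc1 hc2 i hi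
    have e1 : (((i+1 : ℕ)) : ℚ) = (i:ℚ) + 1 := by push_cast; ring
    rw [e1] at hm
    have e3 : ((i:ℚ) + 1 + 1) = (i:ℚ) + 2 := by ring
    rw [e3] at hm
    exact hm


end
end

section
/- Let q be a power of 2 and 1 ≤ r, s ≤ q. Then in Γ the product δ_r δ_s is a linear combination of δ₁, …, δ_q with non-negative integer coefficients. Furthermore δ_r δ_q = r·δ_q. -/
open scoped BigOperators

noncomputable section

attribute [local instance] Classical.propDecidable

lemma nim_xor_lt_two_pow {a b n : ℕ} (ha : a < 2 ^ n) (hb : b < 2 ^ n) : a ^^^ b < 2 ^ n := by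
  by_contra h
  obtain ⟨i, hi, hbit⟩ := Nat.exists_ge_and_testBit_of_ge_two_pow (Nat.le_of_not_lt h)
  have h2 : (2 : ℕ) ^ n ≤ 2 ^ i := Nat.pow_le_pow_right (by norm_num) hi
  rw [Nat.testBit_xor, Nat.testBit_lt_two_pow (lt_of_lt_of_le ha h2),
    Nat.testBit_lt_two_pow (lt_of_lt_of_le hb h2)] at hbit
  simp at hbit

lemma nim_two_pow_xor {b n : ℕ} (hb : b < 2 ^ n) : 2 ^ n ^^^ b = 2 ^ n + b := by
  apply Nat.eq_of_testBit_eq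
  intro i
  rcases lt_trichotomy i n with h | rfl | h
  · rw [Nat.testBit_xor, Nat.testBit_two_pow_add_gt h,
      Nat.testBit_two_pow_of_ne (by omega)]
    simp
  · rw [Nat.testBit_xor, Nat.testBit_two_pow_add_eq, Nat.testBit_two_pow_self,
      Nat.testBit_lt_two_pow hb]
    rfl
  · have h1 : Nat.testBit b i = false :=
      Nat.testBit_lt_two_pow (by calc b < 2 ^ n := hb
                                   _ ≤ 2 ^ i := Nat.pow_le_pow_right (by norm_num) (by omega))
    have h2 : Nat.testBit (2 ^ n + b) i = false :=
      Nat.testBit_lt_two_pow (by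
        have h3 : (2:ℕ) ^ (n+1) = 2 ^ n + 2 ^ n := by ring
        have h4 : (2 : ℕ) ^ (n + 1) ≤ 2 ^ i := Nat.pow_le_pow_right (by norm_num) h
        omega)
    rw [Nat.testBit_xor, h1, h2, Nat.testBit_two_pow_of_ne (by omega)]
    rfl

lemma lamZ_mul (i j : ℕ) : lamZ i * lamZ j = lamZ (i ^^^ j) := by
  unfold lamZ
  rw [MonoidAlgebra.single_mul_single, one_mul]
  rfl

lemma lamZ_zero : lamZ 0 = 1 := by
  rw [MonoidAlgebra.one_def]; rfl

lemma lamZ_mul_deltaPow {m j : ℕ} (hj : j < 2 ^ m) :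
    lamZ j * deltaZ (2 ^ m) = ((-1 : ℤ) ^ j) • deltaZ (2 ^ m) := by
  unfold deltaZ
  rw [Finset.mul_sum, Finset.smul_sum]
  refine Finset.sum_nbij' (fun i => j ^^^ i) (fun i => j ^^^ i) ?_ ?_ ?_ ?_ ?_
  · intro a ha
    rw [Finset.mem_range] at *
    exact nim_xor_lt_two_pow hj ha
  · intro a ha
    rw [Finset.mem_range] at *
    exact nim_xor_lt_two_pow hj ha
  · intro a _; exact xor_cancel_left _ _
  · intro a _; exact xor_cancel_left _ _
  · intro a _
    rw [mul_smul_comm, lamZ_mul, smul_smul, ← pow_add]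
    congr 1
    rw [neg_one_pow_eq_pow_mod_two, neg_one_pow_eq_pow_mod_two (n := j + (j ^^^ a))]
    congr 1
    have := Nat.xor_mod_two_eq (m := j) (n := a)
    omega

lemma deltaZ_mul_deltaPow {m r : ℕ} (hr : r ≤ 2 ^ m) :
    deltaZ r * deltaZ (2 ^ m) = (r : ℤ) • deltaZ (2 ^ m) := by
  rw [deltaZ, Finset.sum_mul]
  have key : ∀ j ∈ Finset.range r, ((-1 : ℤ) ^ j • lamZ j) * deltaZ (2 ^ m) = deltaZ (2 ^ m) := by
    intro j hj
    rw [Finset.mem_range] at hj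
    rw [smul_mul_assoc, lamZ_mul_deltaPow (lt_of_lt_of_le hj hr), smul_smul, ← pow_add]
    have h2 : (-1 : ℤ) ^ (j + j) = 1 := by
      rw [neg_one_pow_eq_pow_mod_two]
      have : (j + j) % 2 = 0 := by omega
      rw [this, pow_zero]
    rw [h2, one_smul]
  rw [Finset.sum_congr rfl key, Finset.sum_const, Finset.card_range, natCast_zsmul]

lemma deltaZ_two_pow_add {m k : ℕ} (hk : k ≤ 2 ^ m) :
    deltaZ (2 ^ m + k) = deltaZ (2 ^ m) + ((-1 : ℤ) ^ 2 ^ m) • (lamZ (2 ^ m) * deltaZ k) := by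
  have h2 : ((-1 : ℤ) ^ 2 ^ m) • (lamZ (2 ^ m) * deltaZ k)
      = ∑ x ∈ Finset.range k, (-1 : ℤ) ^ (2 ^ m + x) • lamZ (2 ^ m + x) := by
    rw [deltaZ, Finset.mul_sum, Finset.smul_sum]
    refine Finset.sum_congr rfl ?_
    intro x hx
    rw [Finset.mem_range] at hx
    rw [mul_smul_comm, lamZ_mul, nim_two_pow_xor (lt_of_lt_of_le hx hk), smul_smul, ← pow_add]
  rw [h2, deltaZ, Finset.sum_range_add, ← deltaZ]

lemma sum_Icc_shift (q : ℕ) (f : ℕ → GammaZ) :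
    ∑ i ∈ Finset.Icc 1 q, f i = ∑ i ∈ Finset.range q, f (i + 1) := by
  induction q with
  | zero => simp
  | succ q ih => rw [Finset.sum_Icc_succ_top (by omega), ih, Finset.sum_range_succ]

lemma sum_split_last {M : Type*} [AddCommMonoid M] {Q : ℕ} (hQ : 1 ≤ Q) (f : ℕ → M) :
    ∑ i ∈ Finset.range Q, f i = ∑ i ∈ Finset.range (Q - 1), f i + f (Q - 1) := by
  conv_lhs => rw [show Q = Q - 1 + 1 by omega]
  rw [Finset.sum_range_succ]

lemma hAQ_gen {n k : ℕ} (hk : k ≤ 2 ^ n) :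
    ((-1 : ℤ) ^ 2 ^ n) • (lamZ (2 ^ n) * deltaZ k) = deltaZ (2 ^ n + k) - deltaZ (2 ^ n) := by
  rw [deltaZ_two_pow_add hk, add_sub_cancel_left]

lemma small_step {n r s : ℕ} (hr : r ≤ 2 ^ n) (hs : s ≤ 2 ^ n) (c : ℕ → ℕ)
    (hc : deltaZ r * deltaZ s = ∑ i ∈ Finset.range (2 ^ n), (c i : ℤ) • deltaZ (i + 1))
    (hsum : ∑ i ∈ Finset.range (2 ^ n), c i ≤ min r s) :
    ∃ d : ℕ → ℕ,
      deltaZ r * deltaZ s = ∑ i ∈ Finset.range (2 ^ n + 2 ^ n), (d i : ℤ) • deltaZ (i + 1) ∧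
      (∑ i ∈ Finset.range (2 ^ n + 2 ^ n), d i) ≤ min r s ∧
      r + s ≤ d (2 ^ n + 2 ^ n - 1) + (2 ^ n + 2 ^ n) := by
  have hQ1 : (1 : ℕ) ≤ 2 ^ n := Nat.one_le_two_pow
  refine ⟨fun i => if i < 2 ^ n then c i else 0, ?_, ?_, ?_⟩
  · rw [hc, Finset.sum_range_add]
    have t1 : ∑ i ∈ Finset.range (2 ^ n),
        ((if i < 2 ^ n then c i else 0 : ℕ) : ℤ) • deltaZ (i + 1)
        = ∑ i ∈ Finset.range (2 ^ n), (c i : ℤ) • deltaZ (i + 1) :=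
      Finset.sum_congr rfl fun i hi => by rw [if_pos (Finset.mem_range.mp hi)]
    have t2 : ∑ i ∈ Finset.range (2 ^ n),
        ((if 2 ^ n + i < 2 ^ n then c (2 ^ n + i) else 0 : ℕ) : ℤ) • deltaZ (2 ^ n + i + 1)
        = 0 :=
      Finset.sum_eq_zero fun i hi => by rw [if_neg (by omega), Nat.cast_zero, zero_smul]
    rw [t1, t2, add_zero]
  · rw [Finset.sum_range_add]
    have t1 : ∑ i ∈ Finset.range (2 ^ n), (if i < 2 ^ n then c i else 0)
        = ∑ i ∈ Finset.range (2 ^ n), c i :=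
      Finset.sum_congr rfl fun i hi => by rw [if_pos (Finset.mem_range.mp hi)]
    have t2 : ∑ i ∈ Finset.range (2 ^ n), (if 2 ^ n + i < 2 ^ n then c (2 ^ n + i) else 0) = 0 :=
      Finset.sum_eq_zero fun i hi => by rw [if_neg (by omega)]
    rw [t1, t2, add_zero]
    exact hsum
  · show r + s ≤ (if 2 ^ n + 2 ^ n - 1 < 2 ^ n then c (2 ^ n + 2 ^ n - 1) else 0)
      + (2 ^ n + 2 ^ n)
    rw [if_neg (by omega)]
    omega

lemma mixed_step {n r s : ℕ} (hr1 : 1 ≤ r) (hrQ : r ≤ 2 ^ n) (hsQ : 2 ^ n < s)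
    (hs2 : s ≤ 2 ^ n + 2 ^ n) (c : ℕ → ℕ)
    (hc : deltaZ r * deltaZ (s - 2 ^ n) = ∑ i ∈ Finset.range (2 ^ n), (c i : ℤ) • deltaZ (i + 1))
    (hsum : ∑ i ∈ Finset.range (2 ^ n), c i ≤ min r (s - 2 ^ n))
    (hlast : r + (s - 2 ^ n) ≤ c (2 ^ n - 1) + 2 ^ n) :
    ∃ d : ℕ → ℕ,
      deltaZ r * deltaZ s = ∑ i ∈ Finset.range (2 ^ n + 2 ^ n), (d i : ℤ) • deltaZ (i + 1) ∧
      (∑ i ∈ Finset.range (2 ^ n + 2 ^ n), d i) ≤ r ∧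
      r + s ≤ d (2 ^ n + 2 ^ n - 1) + (2 ^ n + 2 ^ n) := by
  have hQ1 : (1 : ℕ) ≤ 2 ^ n := Nat.one_le_two_pow
  set b := s - 2 ^ n with hbdef
  set S := ∑ i ∈ Finset.range (2 ^ n), c i with hSdef
  have hSr : S ≤ r := hsum.trans (min_le_left _ _)
  have hbQ : b ≤ 2 ^ n := by omega
  have hprod : deltaZ r * deltaZ s
      = ((r : ℤ) - (S : ℤ)) • deltaZ (2 ^ n)
        + ∑ i ∈ Finset.range (2 ^ n), (c i : ℤ) • deltaZ (2 ^ n + (i + 1)) := by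
    calc deltaZ r * deltaZ s
        = deltaZ r * (deltaZ (2 ^ n) + ((-1 : ℤ) ^ 2 ^ n) • (lamZ (2 ^ n) * deltaZ b)) := by
          rw [show s = 2 ^ n + b by omega, deltaZ_two_pow_add hbQ]
      _ = (r : ℤ) • deltaZ (2 ^ n)
          + ((-1 : ℤ) ^ 2 ^ n) • (lamZ (2 ^ n) * (deltaZ r * deltaZ b)) := by
          rw [mul_add, deltaZ_mul_deltaPow hrQ, mul_smul_comm, mul_left_comm]
      _ = (r : ℤ) • deltaZ (2 ^ n)
          + ∑ i ∈ Finset.range (2 ^ n),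
              (c i : ℤ) • (((-1 : ℤ) ^ 2 ^ n) • (lamZ (2 ^ n) * deltaZ (i + 1))) := by
          rw [hc, Finset.mul_sum, Finset.smul_sum]
          congr 1
          exact Finset.sum_congr rfl fun i _ => by rw [mul_smul_comm, smul_comm]
      _ = (r : ℤ) • deltaZ (2 ^ n)
          + ∑ i ∈ Finset.range (2 ^ n),
              (c i : ℤ) • (deltaZ (2 ^ n + (i + 1)) - deltaZ (2 ^ n)) := by
          congr 1
          refine Finset.sum_congr rfl fun i hi => ?_
          rw [Finset.mem_range] at hi
          rw [hAQ_gen (by omega : i + 1 ≤ 2 ^ n)]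
      _ = _ := by
          have hScast : (S : ℤ) = ∑ i ∈ Finset.range (2 ^ n), (c i : ℤ) := by
            rw [hSdef]; push_cast; rfl
          simp only [smul_sub]
          rw [Finset.sum_sub_distrib, ← Finset.sum_smul, sub_smul, hScast]
          abel
  refine ⟨fun i => if i < 2 ^ n - 1 then 0 else if i = 2 ^ n - 1 then r - S else c (i - 2 ^ n),
    ?_, ?_, ?_⟩
  · have e1 : ∑ i ∈ Finset.range (2 ^ n),
        ((if i < 2 ^ n - 1 then 0 else if i = 2 ^ n - 1 then r - S else c (i - 2 ^ n) : ℕ) : ℤ)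
          • deltaZ (i + 1) = ((r : ℤ) - (S : ℤ)) • deltaZ (2 ^ n) := by
      rw [sum_split_last hQ1]
      have z : ∑ i ∈ Finset.range (2 ^ n - 1),
          ((if i < 2 ^ n - 1 then 0 else if i = 2 ^ n - 1 then r - S else c (i - 2 ^ n) : ℕ) : ℤ)
            • deltaZ (i + 1) = 0 :=
        Finset.sum_eq_zero fun i hi => by
          rw [Finset.mem_range] at hi
          rw [if_pos hi, Nat.cast_zero, zero_smul]
      rw [z, zero_add, if_neg (lt_irrefl _), if_pos rfl, show 2 ^ n - 1 + 1 = 2 ^ n by omega,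
        Nat.cast_sub hSr]
    have e2 : ∑ i ∈ Finset.range (2 ^ n),
        ((if 2 ^ n + i < 2 ^ n - 1 then 0 else if 2 ^ n + i = 2 ^ n - 1 then r - S
            else c (2 ^ n + i - 2 ^ n) : ℕ) : ℤ) • deltaZ (2 ^ n + i + 1)
        = ∑ i ∈ Finset.range (2 ^ n), (c i : ℤ) • deltaZ (2 ^ n + (i + 1)) := by
      refine Finset.sum_congr rfl fun i _ => ?_
      rw [if_neg (by omega), if_neg (by omega), show 2 ^ n + i - 2 ^ n = i by omega]
      rfl
    rw [hprod, Finset.sum_range_add, e1, e2]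
  · have n1 : ∑ i ∈ Finset.range (2 ^ n),
        (if i < 2 ^ n - 1 then 0 else if i = 2 ^ n - 1 then r - S else c (i - 2 ^ n)) = r - S := by
      rw [sum_split_last hQ1]
      have z : ∑ i ∈ Finset.range (2 ^ n - 1),
          (if i < 2 ^ n - 1 then 0 else if i = 2 ^ n - 1 then r - S else c (i - 2 ^ n)) = 0 :=
        Finset.sum_eq_zero fun i hi => by
          rw [Finset.mem_range] at hi
          rw [if_pos hi]
      rw [z, zero_add, if_neg (lt_irrefl _), if_pos rfl]
    have n2 : ∑ i ∈ Finset.range (2 ^ n),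
        (if 2 ^ n + i < 2 ^ n - 1 then 0 else if 2 ^ n + i = 2 ^ n - 1 then r - S
          else c (2 ^ n + i - 2 ^ n)) = S := by
      have t : ∀ i ∈ Finset.range (2 ^ n),
          (if 2 ^ n + i < 2 ^ n - 1 then 0 else if 2 ^ n + i = 2 ^ n - 1 then r - S
            else c (2 ^ n + i - 2 ^ n)) = c i := fun i _ => by
        rw [if_neg (by omega), if_neg (by omega), show 2 ^ n + i - 2 ^ n = i by omega]
      rw [Finset.sum_congr rfl t, ← hSdef]
    rw [Finset.sum_range_add, n1, n2]
    omega
  · show r + s ≤ (if 2 ^ n + 2 ^ n - 1 < 2 ^ n - 1 then 0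
      else if 2 ^ n + 2 ^ n - 1 = 2 ^ n - 1 then r - S
      else c (2 ^ n + 2 ^ n - 1 - 2 ^ n)) + (2 ^ n + 2 ^ n)
    rw [if_neg (by omega), if_neg (by omega), show 2 ^ n + 2 ^ n - 1 - 2 ^ n = 2 ^ n - 1 by omega]
    omega

lemma big_step {n r s : ℕ} (hrQ : 2 ^ n < r) (hr2 : r ≤ 2 ^ n + 2 ^ n) (hsQ : 2 ^ n < s)
    (hs2 : s ≤ 2 ^ n + 2 ^ n) (c : ℕ → ℕ)
    (hc : deltaZ (r - 2 ^ n) * deltaZ (s - 2 ^ n)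
      = ∑ i ∈ Finset.range (2 ^ n), (c i : ℤ) • deltaZ (i + 1))
    (hsum : ∑ i ∈ Finset.range (2 ^ n), c i ≤ min (r - 2 ^ n) (s - 2 ^ n))
    (hlast : (r - 2 ^ n) + (s - 2 ^ n) ≤ c (2 ^ n - 1) + 2 ^ n) :
    ∃ d : ℕ → ℕ,
      deltaZ r * deltaZ s = ∑ i ∈ Finset.range (2 ^ n + 2 ^ n), (d i : ℤ) • deltaZ (i + 1) ∧
      (∑ i ∈ Finset.range (2 ^ n + 2 ^ n), d i) ≤ min r s ∧
      r + s ≤ d (2 ^ n + 2 ^ n - 1) + (2 ^ n + 2 ^ n) := by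
  have hQ1 : (1 : ℕ) ≤ 2 ^ n := Nat.one_le_two_pow
  set a := r - 2 ^ n with hadef
  set b := s - 2 ^ n with hbdef
  have haQ : a ≤ 2 ^ n := by omega
  have hbQ : b ≤ 2 ^ n := by omega
  have hab : a + b ≤ c (2 ^ n - 1) + 2 ^ n := hlast
  have hQQ : deltaZ (2 ^ n) * deltaZ (2 ^ n) = ((2 ^ n : ℕ) : ℤ) • deltaZ (2 ^ n) :=
    deltaZ_mul_deltaPow le_rfl
  have hee : ((-1 : ℤ) ^ 2 ^ n) * ((-1 : ℤ) ^ 2 ^ n) = 1 := by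
    rw [← pow_add, neg_one_pow_eq_pow_mod_two]
    have : (2 ^ n + 2 ^ n) % 2 = 0 := by omega
    rw [this, pow_zero]
  have hll : lamZ (2 ^ n) * lamZ (2 ^ n) = 1 := by
    rw [lamZ_mul, Nat.xor_self, lamZ_zero]
  have T2 : deltaZ (2 ^ n) * (((-1 : ℤ) ^ 2 ^ n) • (lamZ (2 ^ n) * deltaZ b))
      = (b : ℤ) • (deltaZ (2 ^ n + 2 ^ n) - deltaZ (2 ^ n)) := by
    rw [mul_smul_comm, mul_left_comm, mul_comm (deltaZ (2 ^ n)) (deltaZ b),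
      deltaZ_mul_deltaPow hbQ, mul_smul_comm, smul_comm, hAQ_gen le_rfl]
  have T3 : (((-1 : ℤ) ^ 2 ^ n) • (lamZ (2 ^ n) * deltaZ a)) * deltaZ (2 ^ n)
      = (a : ℤ) • (deltaZ (2 ^ n + 2 ^ n) - deltaZ (2 ^ n)) := by
    rw [smul_mul_assoc, mul_assoc, deltaZ_mul_deltaPow haQ, mul_smul_comm, smul_comm,
      hAQ_gen le_rfl]
  have T4 : (((-1 : ℤ) ^ 2 ^ n) • (lamZ (2 ^ n) * deltaZ a))
        * (((-1 : ℤ) ^ 2 ^ n) • (lamZ (2 ^ n) * deltaZ b))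
      = ∑ i ∈ Finset.range (2 ^ n), (c i : ℤ) • deltaZ (i + 1) := by
    rw [smul_mul_assoc, mul_smul_comm, smul_smul, hee, one_smul, mul_mul_mul_comm, hll,
      one_mul, hc]
  have hprod : deltaZ r * deltaZ s
      = ∑ i ∈ Finset.range (2 ^ n), (c i : ℤ) • deltaZ (i + 1)
        + (((2 ^ n : ℕ) : ℤ) - (a : ℤ) - (b : ℤ)) • deltaZ (2 ^ n)
        + ((a : ℤ) + (b : ℤ)) • deltaZ (2 ^ n + 2 ^ n) := by
    rw [show r = 2 ^ n + a by omega, show s = 2 ^ n + b by omega,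
      deltaZ_two_pow_add haQ, deltaZ_two_pow_add hbQ, add_mul, mul_add, mul_add,
      hQQ, T2, T3, T4]
    simp only [smul_sub, sub_smul, add_smul]
    abel
  refine ⟨fun i => if i < 2 ^ n - 1 then c i else if i = 2 ^ n - 1 then c (2 ^ n - 1) + 2 ^ n - (a + b)
      else if i = 2 ^ n + 2 ^ n - 1 then a + b else 0, ?_, ?_, ?_⟩
  · have e1 : ∑ i ∈ Finset.range (2 ^ n),
        ((if i < 2 ^ n - 1 then c i else if i = 2 ^ n - 1 then c (2 ^ n - 1) + 2 ^ n - (a + b)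
          else if i = 2 ^ n + 2 ^ n - 1 then a + b else 0 : ℕ) : ℤ) • deltaZ (i + 1)
        = ∑ i ∈ Finset.range (2 ^ n), (c i : ℤ) • deltaZ (i + 1)
          + (((2 ^ n : ℕ) : ℤ) - (a : ℤ) - (b : ℤ)) • deltaZ (2 ^ n) := by
      rw [sum_split_last hQ1, sum_split_last hQ1 (f := fun i => (c i : ℤ) • deltaZ (i + 1))]
      have t : ∑ i ∈ Finset.range (2 ^ n - 1),
          ((if i < 2 ^ n - 1 then c i else if i = 2 ^ n - 1 then c (2 ^ n - 1) + 2 ^ n - (a + b)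
            else if i = 2 ^ n + 2 ^ n - 1 then a + b else 0 : ℕ) : ℤ) • deltaZ (i + 1)
          = ∑ i ∈ Finset.range (2 ^ n - 1), (c i : ℤ) • deltaZ (i + 1) :=
        Finset.sum_congr rfl fun i hi => by
          rw [Finset.mem_range] at hi
          rw [if_pos hi]
      rw [t, if_neg (lt_irrefl _), if_pos rfl, show 2 ^ n - 1 + 1 = 2 ^ n by omega]
      have hcast : ((c (2 ^ n - 1) + 2 ^ n - (a + b) : ℕ) : ℤ)
          = (c (2 ^ n - 1) : ℤ) + ((2 ^ n : ℕ) : ℤ) - (a : ℤ) - (b : ℤ) := by omega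
      rw [hcast]
      simp only [sub_smul, add_smul]
      abel
    have e2 : ∑ i ∈ Finset.range (2 ^ n),
        ((if 2 ^ n + i < 2 ^ n - 1 then c (2 ^ n + i)
          else if 2 ^ n + i = 2 ^ n - 1 then c (2 ^ n - 1) + 2 ^ n - (a + b)
          else if 2 ^ n + i = 2 ^ n + 2 ^ n - 1 then a + b else 0 : ℕ) : ℤ)
            • deltaZ (2 ^ n + i + 1)
        = ((a : ℤ) + (b : ℤ)) • deltaZ (2 ^ n + 2 ^ n) := by
      rw [sum_split_last hQ1]
      have z : ∑ i ∈ Finset.range (2 ^ n - 1),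
          ((if 2 ^ n + i < 2 ^ n - 1 then c (2 ^ n + i)
            else if 2 ^ n + i = 2 ^ n - 1 then c (2 ^ n - 1) + 2 ^ n - (a + b)
            else if 2 ^ n + i = 2 ^ n + 2 ^ n - 1 then a + b else 0 : ℕ) : ℤ)
              • deltaZ (2 ^ n + i + 1) = 0 :=
        Finset.sum_eq_zero fun i hi => by
          rw [Finset.mem_range] at hi
          rw [if_neg (by omega), if_neg (by omega), if_neg (by omega), Nat.cast_zero, zero_smul]
      rw [z, zero_add, if_neg (by omega), if_neg (by omega), if_pos (by omega : 2 ^ n + (2 ^ n - 1) = 2 ^ n + 2 ^ n - 1),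
        show 2 ^ n + (2 ^ n - 1) + 1 = 2 ^ n + 2 ^ n by omega, Nat.cast_add]
    rw [hprod, Finset.sum_range_add, e1, e2]
  · have n1 : ∑ i ∈ Finset.range (2 ^ n),
        (if i < 2 ^ n - 1 then c i else if i = 2 ^ n - 1 then c (2 ^ n - 1) + 2 ^ n - (a + b)
          else if i = 2 ^ n + 2 ^ n - 1 then a + b else 0)
        = ∑ i ∈ Finset.range (2 ^ n - 1), c i + (c (2 ^ n - 1) + 2 ^ n - (a + b)) := by
      rw [sum_split_last hQ1]
      have t : ∑ i ∈ Finset.range (2 ^ n - 1),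
          (if i < 2 ^ n - 1 then c i else if i = 2 ^ n - 1 then c (2 ^ n - 1) + 2 ^ n - (a + b)
            else if i = 2 ^ n + 2 ^ n - 1 then a + b else 0)
          = ∑ i ∈ Finset.range (2 ^ n - 1), c i :=
        Finset.sum_congr rfl fun i hi => by
          rw [Finset.mem_range] at hi
          rw [if_pos hi]
      rw [t, if_neg (lt_irrefl _), if_pos rfl]
    have n2 : ∑ i ∈ Finset.range (2 ^ n),
        (if 2 ^ n + i < 2 ^ n - 1 then c (2 ^ n + i)
          else if 2 ^ n + i = 2 ^ n - 1 then c (2 ^ n - 1) + 2 ^ n - (a + b)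
          else if 2 ^ n + i = 2 ^ n + 2 ^ n - 1 then a + b else 0) = a + b := by
      rw [sum_split_last hQ1]
      have z : ∑ i ∈ Finset.range (2 ^ n - 1),
          (if 2 ^ n + i < 2 ^ n - 1 then c (2 ^ n + i)
            else if 2 ^ n + i = 2 ^ n - 1 then c (2 ^ n - 1) + 2 ^ n - (a + b)
            else if 2 ^ n + i = 2 ^ n + 2 ^ n - 1 then a + b else 0) = 0 :=
        Finset.sum_eq_zero fun i hi => by
          rw [Finset.mem_range] at hi
          rw [if_neg (by omega), if_neg (by omega), if_neg (by omega)]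
      rw [z, zero_add, if_neg (by omega), if_neg (by omega),
        if_pos (by omega : 2 ^ n + (2 ^ n - 1) = 2 ^ n + 2 ^ n - 1)]
    have nc : ∑ i ∈ Finset.range (2 ^ n), c i
        = ∑ i ∈ Finset.range (2 ^ n - 1), c i + c (2 ^ n - 1) := sum_split_last hQ1 _
    rw [Finset.sum_range_add, n1, n2]
    omega
  · show r + s ≤ (if 2 ^ n + 2 ^ n - 1 < 2 ^ n - 1 then c (2 ^ n + 2 ^ n - 1)
      else if 2 ^ n + 2 ^ n - 1 = 2 ^ n - 1 then c (2 ^ n - 1) + 2 ^ n - (a + b)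
      else if 2 ^ n + 2 ^ n - 1 = 2 ^ n + 2 ^ n - 1 then a + b else 0) + (2 ^ n + 2 ^ n)
    rw [if_neg (by omega), if_neg (by omega), if_pos rfl]
    omega

lemma key (n : ℕ) : ∀ r s : ℕ, 1 ≤ r → r ≤ 2 ^ n → 1 ≤ s → s ≤ 2 ^ n →
    ∃ c : ℕ → ℕ,
      deltaZ r * deltaZ s = ∑ i ∈ Finset.range (2 ^ n), (c i : ℤ) • deltaZ (i + 1) ∧
      (∑ i ∈ Finset.range (2 ^ n), c i) ≤ min r s ∧
      r + s ≤ c (2 ^ n - 1) + 2 ^ n := by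
  induction n with
  | zero =>
    intro r s hr1 hr2 hs1 hs2
    obtain rfl : r = 1 := by simpa using le_antisymm hr2 hr1
    obtain rfl : s = 1 := by simpa using le_antisymm hs2 hs1
    refine ⟨fun _ => 1, ?_, by simp, by norm_num⟩
    have h := deltaZ_mul_deltaPow (m := 0) (r := 1) (by norm_num)
    simpa using h
  | succ n ih =>
    intro r s hr1 hr2 hs1 hs2
    have hq : (2 : ℕ) ^ (n + 1) = 2 ^ n + 2 ^ n := by ring
    rw [hq] at hr2 hs2 ⊢
    rcases le_or_gt r (2 ^ n) with hrQ | hrQ <;> rcases le_or_gt s (2 ^ n) with hsQ | hsQ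
    · obtain ⟨c, hc, hsum, -⟩ := ih r s hr1 hrQ hs1 hsQ
      exact small_step hrQ hsQ c hc hsum
    · obtain ⟨c, hc, hsum, hlast⟩ := ih r (s - 2 ^ n) hr1 hrQ (by omega) (by omega)
      obtain ⟨d, h1, h2, h3⟩ := mixed_step hr1 hrQ hsQ hs2 c hc hsum hlast
      exact ⟨d, h1, le_min h2 (h2.trans (by omega)), h3⟩
    · obtain ⟨c, hc, hsum, hlast⟩ := ih s (r - 2 ^ n) hs1 hsQ (by omega) (by omega)
      obtain ⟨d, h1, h2, h3⟩ := mixed_step hs1 hsQ hrQ hr2 c hc hsum hlast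
      exact ⟨d, by rw [mul_comm]; exact h1, le_min (h2.trans (by omega)) h2, by omega⟩
    · obtain ⟨c, hc, hsum, hlast⟩ := ih (r - 2 ^ n) (s - 2 ^ n) (by omega) (by omega)
        (by omega) (by omega)
      exact big_step hrQ hr2 hsQ hs2 c hc hsum hlast


/-- Lemma 1.12: for `1 ≤ r, s ≤ q = 2ⁿ`, `δ_r δ_s` is a linear combination of
`δ₁, …, δ_q` with non-negative integer coefficients, and `δ_r δ_q = r·δ_q`. -/
theorem statement6 (n r s : ℕ) (hr1 : 1 ≤ r) (hrq : r ≤ 2 ^ n)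
    (hs1 : 1 ≤ s) (hsq : s ≤ 2 ^ n) :
    (∃ c : ℕ → ℕ, deltaZ r * deltaZ s = ∑ i ∈ Finset.Icc 1 (2 ^ n), (c i : ℤ) • deltaZ i) ∧
    deltaZ r * deltaZ (2 ^ n) = (r : ℤ) • deltaZ (2 ^ n) := by
  constructor
  · obtain ⟨c, hc, -, -⟩ := key n r s hr1 hrq hs1 hsq
    refine ⟨fun i => c (i - 1), ?_⟩
    rw [hc, sum_Icc_shift]
    refine Finset.sum_congr rfl fun i _ => ?_
    show (c i : ℤ) • deltaZ (i + 1) = (c (i + 1 - 1) : ℤ) • deltaZ (i + 1)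
    rw [show i + 1 - 1 = i by omega]
  · exact deltaZ_mul_deltaPow hrq


end
end

section
/- If α, β ∈ X are convex, then α # β is convex. -/
open scoped BigOperators

noncomputable section

attribute [local instance] Classical.propDecidable

namespace S7Aux

/-- difference sequence at level `n` -/
def dif (n : ℕ) (α : X) (k : ℕ) : ℚ :=
  evI α (((k : ℚ) + 1) / 2 ^ n) - evI α ((k : ℚ) / 2 ^ n)

lemma dif_antitone {α : X} (hα : ConvexX α) {n j k : ℕ} (hjk : j ≤ k) (hk : k < 2 ^ n) :
    dif n α k ≤ dif n α j := by
  induction k with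
  | zero =>
    have : j = 0 := by omega
    simp [this]
  | succ m ihm =>
    rcases Nat.lt_or_ge j (m + 1) with h | h
    · have h1 : dif n α (m + 1) ≤ dif n α m := by
        have H := hα n (m + 1) (Nat.succ_pos m) hk
        have e1 : (((m + 1 : ℕ) : ℚ) - 1) = (m : ℚ) := by push_cast; ring
        have e2 : (((m + 1 : ℕ) : ℚ) + 1) = ((m : ℚ) + 1) + 1 := by push_cast; ring
        rw [e1, e2] at H
        push_cast at H
        unfold dif
        push_cast
        linarith
      exact h1.trans (ihm (by omega) (by omega))
    · have : j = m + 1 := by omega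
      simp [this]

lemma mem1 {k n : ℕ} (h : k + 1 ≤ 2 ^ n) : ((k : ℚ) + 1) / 2 ^ n ∈ dyadicI := by
  have := dyadicI_mem (i := k + 1) (n := n) h
  push_cast at this
  exact this

lemma evI_T0 (α : X) {t : ℚ} (ht : t ∈ dyadicI) : evI (T0 α) t = evI α (t / 2) := by
  unfold evI
  rw [dif_pos ht]
  rfl

lemma evI_T1 (α : X) {t : ℚ} (ht : t ∈ dyadicI) : evI (T1 α) t = evI α ((1 + t) / 2) := by
  unfold evI
  rw [dif_pos ht]
  rfl

lemma half_shift (x : ℚ) (n : ℕ) : (1 + x / 2 ^ n) / 2 = (2 ^ n + x) / 2 ^ (n + 1) := by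
  rw [div_eq_div_iff (by norm_num) (by positivity : ((2 : ℚ) ^ (n + 1)) ≠ 0)]
  field_simp
  ring

lemma dif_T0 (α : X) {n k : ℕ} (hk : k < 2 ^ n) : dif n (T0 α) k = dif (n + 1) α k := by
  unfold dif
  rw [evI_T0 α (mem1 hk), evI_T0 α (dyadicI_mem hk.le),
    show (((k : ℚ) + 1) / 2 ^ n) / 2 = ((k : ℚ) + 1) / 2 ^ (n + 1) by ring,
    show (((k : ℚ)) / 2 ^ n) / 2 = ((k : ℚ)) / 2 ^ (n + 1) by ring]

lemma dif_T1 (α : X) {n k : ℕ} (hk : k < 2 ^ n) :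
    dif n (T1 α) k = dif (n + 1) α (2 ^ n + k) := by
  unfold dif
  rw [evI_T1 α (mem1 hk), evI_T1 α (dyadicI_mem hk.le),
    show (1 + ((k : ℚ) + 1) / 2 ^ n) / 2 = ((2 ^ n + (k : ℚ)) + 1) / 2 ^ (n + 1) by
      rw [half_shift]; ring,
    show (1 + ((k : ℚ)) / 2 ^ n) / 2 = ((2 ^ n + (k : ℚ))) / 2 ^ (n + 1) by
      rw [half_shift]]
  push_cast
  ring_nf

lemma pow_succ_nat (n : ℕ) : (2 : ℕ) ^ (n + 1) = 2 ^ n + 2 ^ n := by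
  rw [pow_succ]; ring

lemma convexX_T0 {α : X} (hα : ConvexX α) : ConvexX (T0 α) := by
  intro n i hi0 hi
  have h1 : ((i : ℚ) - 1) / 2 ^ n ∈ dyadicI := by
    have := dyadicI_mem (i := i - 1) (n := n) (by omega)
    rwa [show ((i - 1 : ℕ) : ℚ) = (i : ℚ) - 1 by push_cast [hi0]; ring] at this
  have h2 : ((i : ℚ) + 1) / 2 ^ n ∈ dyadicI := mem1 hi
  have h3 : ((i : ℚ)) / 2 ^ n ∈ dyadicI := dyadicI_mem hi.le
  rw [evI_T0 α h1, evI_T0 α h2, evI_T0 α h3,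
    show (((i : ℚ) - 1) / 2 ^ n) / 2 = ((i : ℚ) - 1) / 2 ^ (n + 1) by ring,
    show (((i : ℚ) + 1) / 2 ^ n) / 2 = ((i : ℚ) + 1) / 2 ^ (n + 1) by ring,
    show (((i : ℚ)) / 2 ^ n) / 2 = ((i : ℚ)) / 2 ^ (n + 1) by ring]
  exact hα (n + 1) i hi0 (by rw [pow_succ_nat]; omega)

lemma convexX_T1 {α : X} (hα : ConvexX α) : ConvexX (T1 α) := by
  intro n i hi0 hi
  have h1 : ((i : ℚ) - 1) / 2 ^ n ∈ dyadicI := by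
    have := dyadicI_mem (i := i - 1) (n := n) (by omega)
    rwa [show ((i - 1 : ℕ) : ℚ) = (i : ℚ) - 1 by push_cast [hi0]; ring] at this
  have h2 : ((i : ℚ) + 1) / 2 ^ n ∈ dyadicI := mem1 hi
  have h3 : ((i : ℚ)) / 2 ^ n ∈ dyadicI := dyadicI_mem hi.le
  rw [evI_T1 α h1, evI_T1 α h2, evI_T1 α h3,
    show (1 + ((i : ℚ) - 1) / 2 ^ n) / 2 = (((2 ^ n + i : ℕ) : ℚ) - 1) / 2 ^ (n + 1) by
      rw [half_shift]; push_cast; ring,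
    show (1 + ((i : ℚ) + 1) / 2 ^ n) / 2 = (((2 ^ n + i : ℕ) : ℚ) + 1) / 2 ^ (n + 1) by
      rw [half_shift]; push_cast; ring,
    show (1 + ((i : ℚ)) / 2 ^ n) / 2 = (((2 ^ n + i : ℕ) : ℚ)) / 2 ^ (n + 1) by
      rw [half_shift]; push_cast; ring]
  exact hα (n + 1) (2 ^ n + i) (by omega) (by rw [pow_succ_nat]; omega)

/-- The cross relation used in the key gluing inequality. -/
def Rel (α α' : X) : Prop :=
  ∀ n k : ℕ, k < 2 ^ n → dif n α' (2 ^ n - 1 - k) ≤ dif n α k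

lemma Rel_T0_T1 {α α' : X} (h : Rel α α') : Rel (T0 α) (T1 α') := by
  intro n k hk
  have hp := pow_succ_nat n
  rw [dif_T0 α hk, dif_T1 α' (show 2 ^ n - 1 - k < 2 ^ n by omega),
    show 2 ^ n + (2 ^ n - 1 - k) = 2 ^ (n + 1) - 1 - k by omega]
  exact h (n + 1) k (by omega)

lemma Rel_T1_T0 {α α' : X} (h : Rel α α') : Rel (T1 α) (T0 α') := by
  intro n k hk
  have hp := pow_succ_nat n
  rw [dif_T1 α hk, dif_T0 α' (show 2 ^ n - 1 - k < 2 ^ n by omega),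
    show 2 ^ n - 1 - k = 2 ^ (n + 1) - 1 - (2 ^ n + k) by omega]
  exact h (n + 1) (2 ^ n + k) (by omega)

lemma Rel_of_convex {α : X} (hα : ConvexX α) : Rel (T0 α) (T1 α) := by
  intro n k hk
  have hp := pow_succ_nat n
  rw [dif_T0 α hk, dif_T1 α (show 2 ^ n - 1 - k < 2 ^ n by omega),
    show 2 ^ n + (2 ^ n - 1 - k) = 2 ^ (n + 1) - 1 - k by omega]
  exact dif_antitone hα (by omega) (by omega)

lemma hashAux_zero (n : ℕ) (α β : X) : hashAux n α β 0 = 0 := by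
  induction n generalizing α β with
  | zero => simp [hashAux]
  | succ n ih => norm_num [hashAux, ih]

lemma hashAux_le_half (n : ℕ) (α β : X) {t : ℚ} (ht : t ≤ 1 / 2) :
    hashAux (n + 1) α β t =
      hashAux n (T0 α) (T0 β) (2 * t) + hashAux n (T1 α) (T1 β) (2 * t) := by
  show (if t ≤ 1/2 then _ else _) = _
  rw [if_pos ht]

lemma hashAux_ge_half (n : ℕ) (α β : X) {t : ℚ} (ht : 1 / 2 ≤ t) :
    hashAux (n + 1) α β t =
      hashAux n (T0 α) (T0 β) 1 + hashAux n (T1 α) (T1 β) 1 +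
        hashAux n (T0 α) (T1 β) (2 * t - 1) + hashAux n (T1 α) (T0 β) (2 * t - 1) := by
  by_cases h : t ≤ 1 / 2
  · have he : t = 1 / 2 := le_antisymm h ht
    subst he
    show (if (1:ℚ)/2 ≤ 1/2 then _ else _) = _
    rw [if_pos le_rfl]
    norm_num [hashAux_zero]
  · show (if t ≤ 1/2 then _ else _) = _
    rw [if_neg h]

lemma half_pow_le (n : ℕ) : (1 : ℚ) / 2 ^ (n + 1) ≤ 1 / 2 := by
  have h2 : (2 : ℚ) ≤ 2 ^ (n + 1) := by
    calc (2 : ℚ) = 2 ^ 1 := (pow_one 2).symm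
    _ ≤ 2 ^ (n + 1) := by
        apply pow_le_pow_right₀ (by norm_num) (by omega)
  rw [div_le_div_iff₀ (by positivity) (by norm_num)]
  linarith

lemma keyG (n : ℕ) : ∀ α α' β β' : X, Rel α α' → Rel β β' →
    hashAux n α β' (1 / 2 ^ n) + hashAux n α' β (1 / 2 ^ n) ≤
      (hashAux n α β 1 - hashAux n α β (1 - 1 / 2 ^ n)) +
        (hashAux n α' β' 1 - hashAux n α' β' (1 - 1 / 2 ^ n)) := by
  induction n with
  | zero =>
    intro α α' β β' hA hB
    have h1 := hA 0 0 (by norm_num)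
    have h2 := hB 0 0 (by norm_num)
    simp only [dif, pow_zero, Nat.cast_zero, zero_add, zero_div] at h1 h2
    norm_num [hashAux] at h1 h2 ⊢
    nlinarith
  | succ n ih =>
    intro α α' β β' hA hB
    have I1 := ih (T0 α) (T1 α') (T1 β) (T0 β') (Rel_T0_T1 hA) (Rel_T1_T0 hB)
    have I2 := ih (T1 α) (T0 α') (T0 β) (T1 β') (Rel_T1_T0 hA) (Rel_T0_T1 hB)
    have hh := half_pow_le n
    have e1 : (2 : ℚ) * (1 / 2 ^ (n + 1)) = 1 / 2 ^ n := by ring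
    have e2 : (2 : ℚ) * 1 - 1 = 1 := by ring
    have e3 : (2 : ℚ) * (1 - 1 / 2 ^ (n + 1)) - 1 = 1 - 1 / 2 ^ n := by ring
    rw [hashAux_le_half n α β' hh, hashAux_le_half n α' β hh,
      hashAux_ge_half n α β (by norm_num), hashAux_ge_half n α' β' (by norm_num),
      hashAux_ge_half n α β (by linarith), hashAux_ge_half n α' β' (by linarith),
      e1, e2, e3]
    linarith

lemma keyP (n : ℕ) : ∀ α β : X, ConvexX α → ConvexX β → ∀ i : ℕ, 0 < i → i < 2 ^ n →
    hashAux n α β (((i : ℚ) - 1) / 2 ^ n) + hashAux n α β (((i : ℚ) + 1) / 2 ^ n) ≤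
      2 * hashAux n α β ((i : ℚ) / 2 ^ n) := by
  induction n with
  | zero => intro _ _ _ _ i h1 h2; omega
  | succ n ih =>
    intro α β hα hβ i hi0 hi
    have hp := pow_succ_nat n
    have hpq : ((2 : ℚ)) ^ (n + 1) = 2 ^ n * 2 := by ring
    have hposn : (0 : ℚ) < 2 ^ n := by positivity
    rcases lt_trichotomy i (2 ^ n) with hc | hc | hc
    · -- left case : all points in [0, 1/2]
      have hiq : ((i : ℚ)) + 1 ≤ 2 ^ n := by exact_mod_cast hc
      have l1 : ((i : ℚ) - 1) / 2 ^ (n + 1) ≤ 1 / 2 := by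
        rw [div_le_div_iff₀ (by positivity) (by norm_num)]
        rw [hpq]; nlinarith
      have l2 : ((i : ℚ) + 1) / 2 ^ (n + 1) ≤ 1 / 2 := by
        rw [div_le_div_iff₀ (by positivity) (by norm_num)]
        rw [hpq]; nlinarith
      have l3 : ((i : ℚ)) / 2 ^ (n + 1) ≤ 1 / 2 := by
        rw [div_le_div_iff₀ (by positivity) (by norm_num)]
        rw [hpq]; nlinarith
      rw [hashAux_le_half n α β l1, hashAux_le_half n α β l2, hashAux_le_half n α β l3,
        show (2 : ℚ) * (((i : ℚ) - 1) / 2 ^ (n + 1)) = ((i : ℚ) - 1) / 2 ^ n by ring,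
        show (2 : ℚ) * (((i : ℚ) + 1) / 2 ^ (n + 1)) = ((i : ℚ) + 1) / 2 ^ n by ring,
        show (2 : ℚ) * (((i : ℚ)) / 2 ^ (n + 1)) = ((i : ℚ)) / 2 ^ n by ring]
      have A := ih (T0 α) (T0 β) (convexX_T0 hα) (convexX_T0 hβ) i hi0 hc
      have B := ih (T1 α) (T1 β) (convexX_T1 hα) (convexX_T1 hβ) i hi0 hc
      linarith
    · -- middle case : i = 2^n
      subst hc
      have hq : ((2 ^ n : ℕ) : ℚ) = 2 ^ n := by push_cast; ring
      have l1 : (((2 ^ n : ℕ) : ℚ) - 1) / 2 ^ (n + 1) ≤ 1 / 2 := by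
        rw [hq, div_le_div_iff₀ (by positivity) (by norm_num), hpq]; nlinarith
      have l3 : (((2 ^ n : ℕ) : ℚ)) / 2 ^ (n + 1) ≤ 1 / 2 := by
        rw [hq, div_le_div_iff₀ (by positivity) (by norm_num), hpq]; nlinarith
      have l2 : (1 : ℚ) / 2 ≤ (((2 ^ n : ℕ) : ℚ) + 1) / 2 ^ (n + 1) := by
        rw [hq, div_le_div_iff₀ (by norm_num) (by positivity), hpq]; nlinarith
      rw [hashAux_le_half n α β l1, hashAux_le_half n α β l3, hashAux_ge_half n α β l2,
        show (2 : ℚ) * ((((2 ^ n : ℕ) : ℚ) - 1) / 2 ^ (n + 1)) = 1 - 1 / 2 ^ n by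
          rw [hq]; field_simp; ring,
        show (2 : ℚ) * ((((2 ^ n : ℕ) : ℚ)) / 2 ^ (n + 1)) = 1 by
          rw [hq]; field_simp; ring,
        show (2 : ℚ) * ((((2 ^ n : ℕ) : ℚ) + 1) / 2 ^ (n + 1)) - 1 = 1 / 2 ^ n by
          rw [hq]; field_simp; ring]
      have G := keyG n (T0 α) (T1 α) (T0 β) (T1 β) (Rel_of_convex hα) (Rel_of_convex hβ)
      linarith
    · -- right case : all points in [1/2, 1]
      set j : ℕ := i - 2 ^ n with hj
      have hij : i = 2 ^ n + j := by omega
      have hiq : ((i : ℚ)) = 2 ^ n + (j : ℚ) := by rw [hij]; push_cast; ring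
      have hj0 : 0 < j := by omega
      have hjn : j < 2 ^ n := by omega
      have hjq : (1 : ℚ) ≤ (j : ℚ) := by exact_mod_cast hj0
      have l1 : (1 : ℚ) / 2 ≤ ((i : ℚ) - 1) / 2 ^ (n + 1) := by
        rw [div_le_div_iff₀ (by norm_num) (by positivity), hpq, hiq]; nlinarith
      have l2 : (1 : ℚ) / 2 ≤ ((i : ℚ) + 1) / 2 ^ (n + 1) := by
        rw [div_le_div_iff₀ (by norm_num) (by positivity), hpq, hiq]; nlinarith
      have l3 : (1 : ℚ) / 2 ≤ ((i : ℚ)) / 2 ^ (n + 1) := by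
        rw [div_le_div_iff₀ (by norm_num) (by positivity), hpq, hiq]; nlinarith
      rw [hashAux_ge_half n α β l1, hashAux_ge_half n α β l2, hashAux_ge_half n α β l3,
        show (2 : ℚ) * (((i : ℚ) - 1) / 2 ^ (n + 1)) - 1 = ((j : ℚ) - 1) / 2 ^ n by
          rw [hiq]; field_simp; ring,
        show (2 : ℚ) * (((i : ℚ) + 1) / 2 ^ (n + 1)) - 1 = ((j : ℚ) + 1) / 2 ^ n by
          rw [hiq]; field_simp; ring,
        show (2 : ℚ) * (((i : ℚ)) / 2 ^ (n + 1)) - 1 = ((j : ℚ)) / 2 ^ n by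
          rw [hiq]; field_simp; ring]
      have A := ih (T0 α) (T1 β) (convexX_T0 hα) (convexX_T1 hβ) j hj0 hjn
      have B := ih (T1 α) (T0 β) (convexX_T1 hα) (convexX_T0 hβ) j hj0 hjn
      linarith

lemma hashAux_one (n : ℕ) (α β : X) :
    hashAux n α β 1 = (evI α 1 - evI α 0) * (evI β 1 - evI β 0) := by
  induction n generalizing α β with
  | zero => norm_num [hashAux]
  | succ n ih =>
    rw [hashAux_ge_half n α β (by norm_num), show (2 : ℚ) * 1 - 1 = 1 by ring,
      ih, ih, ih, ih,
      evI_T0 α one_mem_dyadicI, evI_T0 α zero_mem_dyadicI,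
      evI_T1 α one_mem_dyadicI, evI_T1 α zero_mem_dyadicI,
      evI_T0 β one_mem_dyadicI, evI_T0 β zero_mem_dyadicI,
      evI_T1 β one_mem_dyadicI, evI_T1 β zero_mem_dyadicI]
    norm_num
    ring

lemma hashAux_succ_eq (n : ℕ) : ∀ (α β : X) (t : ℚ), 0 ≤ t → t ≤ 1 →
    (∃ j : ℤ, (j : ℚ) = t * 2 ^ n) → hashAux (n + 1) α β t = hashAux n α β t := by
  induction n with
  | zero =>
    intro α β t h0 h1 hd
    obtain ⟨j, hj⟩ := hd
    rw [pow_zero, mul_one] at hj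
    subst hj
    have hj0 : (0 : ℤ) ≤ j := by exact_mod_cast h0
    have hj1 : j ≤ (1 : ℤ) := by exact_mod_cast h1
    rcases (by omega : j = 0 ∨ j = 1) with h | h <;> subst h
    · rw [show ((0 : ℤ) : ℚ) = 0 by norm_num, hashAux_zero, hashAux_zero]
    · rw [show ((1 : ℤ) : ℚ) = 1 by norm_num, hashAux_one, hashAux_one]
  | succ n ih =>
    intro α β t h0 h1 hd
    obtain ⟨j, hj⟩ := hd
    by_cases ht : t ≤ 1 / 2
    · rw [hashAux_le_half (n + 1) α β ht, hashAux_le_half n α β ht]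
      have hd' : ∃ k : ℤ, (k : ℚ) = (2 * t) * 2 ^ n := ⟨j, by rw [hj]; ring⟩
      rw [ih (T0 α) (T0 β) (2 * t) (by linarith) (by linarith) hd',
        ih (T1 α) (T1 β) (2 * t) (by linarith) (by linarith) hd']
    · have ht' : (1 : ℚ) / 2 ≤ t := by linarith
      rw [hashAux_ge_half (n + 1) α β ht', hashAux_ge_half n α β ht']
      have hd1 : ∃ k : ℤ, (k : ℚ) = (1 : ℚ) * 2 ^ n := ⟨2 ^ n, by push_cast; ring⟩
      have hd2 : ∃ k : ℤ, (k : ℚ) = (2 * t - 1) * 2 ^ n :=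
        ⟨j - 2 ^ n, by push_cast; rw [hj]; ring⟩
      rw [ih (T0 α) (T0 β) 1 (by norm_num) le_rfl hd1,
        ih (T1 α) (T1 β) 1 (by norm_num) le_rfl hd1,
        ih (T0 α) (T1 β) (2 * t - 1) (by linarith) (by linarith) hd2,
        ih (T1 α) (T0 β) (2 * t - 1) (by linarith) (by linarith) hd2]

lemma hashAux_eq_of_le {m n : ℕ} (h : m ≤ n) (α β : X) {t : ℚ} (h0 : 0 ≤ t) (h1 : t ≤ 1)
    (hd : ∃ j : ℤ, (j : ℚ) = t * 2 ^ m) : hashAux n α β t = hashAux m α β t := by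
  induction n with
  | zero =>
    have : m = 0 := by omega
    subst this; rfl
  | succ n ih =>
    rcases Nat.lt_or_ge m (n + 1) with hm | hm
    · have hle : m ≤ n := by omega
      obtain ⟨j, hj⟩ := hd
      have hd' : ∃ k : ℤ, (k : ℚ) = t * 2 ^ n := by
        refine ⟨j * 2 ^ (n - m), ?_⟩
        push_cast
        rw [hj, show t * 2 ^ m * 2 ^ (n - m) = t * (2 ^ m * 2 ^ (n - m)) by ring,
          ← pow_add, Nat.add_sub_cancel' hle]
      rw [hashAux_succ_eq n α β t h0 h1 hd', ih hle]
    · have : m = n + 1 := by omega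
      subst this; rfl

lemma den_dvd_pow (k n : ℕ) : ((k : ℚ) / 2 ^ n).den ∣ 2 ^ n := by
  have h := Rat.den_dvd (k : ℤ) ((2 : ℤ) ^ n)
  rw [Rat.divInt_eq_div] at h
  push_cast at h
  exact_mod_cast h

lemma hash_eval (α β : X) {k n : ℕ} (hk : k ≤ 2 ^ n) :
    evI (hash α β) ((k : ℚ) / 2 ^ n) = hashAux n α β ((k : ℚ) / 2 ^ n) := by
  have hm := dyadicI_mem (i := k) (n := n) hk
  unfold evI
  rw [dif_pos hm]
  show hashAux (padicValNat 2 ((k : ℚ) / 2 ^ n).den) α β ((k : ℚ) / 2 ^ n) =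
    hashAux n α β ((k : ℚ) / 2 ^ n)
  obtain ⟨e, he, hde⟩ :=
    (Nat.dvd_prime_pow Nat.prime_two).mp (den_dvd_pow k n)
  rw [hde, padicValNat.prime_pow]
  have hdq : ((((k : ℚ) / 2 ^ n).den : ℚ)) = 2 ^ e := by rw [hde]; push_cast; ring
  refine (hashAux_eq_of_le he α β (by positivity) ?_ ?_).symm
  · rw [div_le_one (by positivity)]
    exact_mod_cast hk
  · exact ⟨((k : ℚ) / 2 ^ n).num, by rw [← hdq, Rat.mul_den_eq_num]⟩

end S7Aux

/-- Theorem 1.13: if `α` and `β` are convex, then so is `α # β`. -/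
theorem statement7 (α β : X) (hα : ConvexX α) (hβ : ConvexX β) :
    ConvexX (hash α β) := by
  intro n i hi0 hi
  have c1 : ((i : ℚ) - 1) = ((i - 1 : ℕ) : ℚ) := by
    rw [Nat.cast_sub (by omega : 1 ≤ i)]; norm_num
  have c2 : ((i : ℚ) + 1) = ((i + 1 : ℕ) : ℚ) := by push_cast; ring
  rw [c1, c2, S7Aux.hash_eval α β (by omega : i - 1 ≤ 2 ^ n),
    S7Aux.hash_eval α β (by omega : i + 1 ≤ 2 ^ n),
    S7Aux.hash_eval α β (by omega : i ≤ 2 ^ n), ← c1, ← c2]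
  exact S7Aux.keyP n α β hα hβ i hi0 hi

end
end

section
/- Suppose α ∈ X is convex and Lipschitz with α(0) = 0 and α(1) = 1, and suppose that the power series S_α, viewed as an element of the field of fractions ℚ((w)) of ℚ[[w]], lies in (the image under the natural embedding of) a finite field extension L of ℚ(w). Then μ(α) is algebraic over ℚ of degree at most [L : ℚ(w)]. -/
open scoped BigOperators
open scoped RatFunc

noncomputable section

attribute [local instance] Classical.propDecidable

set_option synthInstance.maxHeartbeats 1000000
set_option maxHeartbeats 1000000

namespace Statement8Aux
section
open PowerSeries Filter Finset

/-- Analytic sum of a power series over `ℚ` at a real point. -/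
noncomputable def psum (f : PowerSeries ℚ) (x : ℝ) : ℝ :=
  ∑' n : ℕ, ((PowerSeries.coeff n f : ℚ) : ℝ) * x ^ n

/-- Absolute convergence of the series at `x`. -/
def PSgood (f : PowerSeries ℚ) (x : ℝ) : Prop :=
  Summable fun n : ℕ => ‖((PowerSeries.coeff n f : ℚ) : ℝ) * x ^ n‖

lemma PSgood.summable {f : PowerSeries ℚ} {x : ℝ} (h : PSgood f x) :
    Summable fun n : ℕ => ((PowerSeries.coeff n f : ℚ) : ℝ) * x ^ n :=
  h.of_norm

lemma inner_sum (f g : PowerSeries ℚ) (x : ℝ) (n : ℕ) :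
    ∑ kl ∈ Finset.HasAntidiagonal.antidiagonal n,
      (((PowerSeries.coeff kl.1 f : ℚ) : ℝ) * x ^ kl.1) *
        (((PowerSeries.coeff kl.2 g : ℚ) : ℝ) * x ^ kl.2)
      = ((PowerSeries.coeff n (f * g) : ℚ) : ℝ) * x ^ n := by
  rw [PowerSeries.coeff_mul]
  push_cast
  rw [Finset.sum_mul]
  refine Finset.sum_congr rfl fun kl hkl => ?_
  have hn : kl.1 + kl.2 = n := Finset.HasAntidiagonal.mem_antidiagonal.mp hkl
  rw [← hn, pow_add]; ring

lemma PSgood.mul {f g : PowerSeries ℚ} {x : ℝ} (hf : PSgood f x) (hg : PSgood g x) :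
    PSgood (f * g) x := by
  have h := summable_norm_sum_mul_antidiagonal_of_summable_norm hf hg
  refine h.congr fun n => ?_
  rw [inner_sum]

lemma psum_mul {f g : PowerSeries ℚ} {x : ℝ} (hf : PSgood f x) (hg : PSgood g x) :
    psum (f * g) x = psum f x * psum g x := by
  have h := tsum_mul_tsum_eq_tsum_sum_antidiagonal_of_summable_norm hf hg
  rw [psum, psum, psum, h]
  exact tsum_congr fun n => (inner_sum f g x n).symm

lemma PSgood_poly (a : Polynomial ℚ) (x : ℝ) : PSgood (a : PowerSeries ℚ) x := by
  refine summable_of_ne_finset_zero (s := Finset.range (a.natDegree + 1)) fun n hn => ?_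
  have h : a.coeff n = 0 :=
    Polynomial.coeff_eq_zero_of_natDegree_lt (by simpa using Finset.mem_range.not.mp hn)
  simp [Polynomial.coeff_coe, h]

lemma psum_poly (a : Polynomial ℚ) (x : ℝ) : psum (a : PowerSeries ℚ) x = Polynomial.aeval x a := by
  rw [psum, tsum_eq_sum (s := Finset.range (a.natDegree + 1)) (fun n hn => by
    have h : a.coeff n = 0 :=
      Polynomial.coeff_eq_zero_of_natDegree_lt (by simpa using Finset.mem_range.not.mp hn)
    simp [Polynomial.coeff_coe, h]), Polynomial.aeval_eq_sum_range]
  refine Finset.sum_congr rfl fun i _ => ?_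
  rw [Polynomial.coeff_coe, Rat.smul_def]

lemma PSgood_one (x : ℝ) : PSgood 1 x := by
  simpa [Polynomial.coe_one] using PSgood_poly 1 x

lemma PSgood.pow {f : PowerSeries ℚ} {x : ℝ} (hf : PSgood f x) (i : ℕ) : PSgood (f ^ i) x := by
  induction i with
  | zero => simpa using PSgood_one x
  | succ n ih => rw [pow_succ]; exact ih.mul hf

lemma psum_one (x : ℝ) : psum 1 x = 1 := by
  have := psum_poly 1 x
  simpa [Polynomial.coe_one] using this

lemma psum_pow {f : PowerSeries ℚ} {x : ℝ} (hf : PSgood f x) (i : ℕ) :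
    psum (f ^ i) x = (psum f x) ^ i := by
  induction i with
  | zero => simpa using psum_one x
  | succ n ih => rw [pow_succ, pow_succ, psum_mul (hf.pow n) hf, ih]

lemma psum_zero (x : ℝ) : psum 0 x = 0 := by simp [psum]

lemma psum_finsum {N : ℕ} (F : ℕ → PowerSeries ℚ) (x : ℝ)
    (h : ∀ i ∈ Finset.range N, PSgood (F i) x) :
    psum (∑ i ∈ Finset.range N, F i) x = ∑ i ∈ Finset.range N, psum (F i) x := by
  rw [psum, show (∑ i ∈ Finset.range N, psum (F i) x)
      = ∑' n : ℕ, ∑ i ∈ Finset.range N, ((PowerSeries.coeff n (F i) : ℚ) : ℝ) * x ^ n from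
    (Summable.tsum_finsetSum (fun i _hi => (h i _hi).summable)).symm]
  refine tsum_congr fun n => ?_
  rw [map_sum]
  push_cast
  rw [Finset.sum_mul]

lemma PSgood_of_bounded {f : PowerSeries ℚ} {M x : ℝ}
    (hM : ∀ n : ℕ, |((PowerSeries.coeff n f : ℚ) : ℝ)| ≤ M) (hx : |x| < 1) : PSgood f x := by
  refine Summable.of_nonneg_of_le (fun n => norm_nonneg _) (fun n => ?_)
    ((summable_geometric_of_lt_one (abs_nonneg x) hx).mul_left M)
  rw [norm_mul, norm_pow]
  calc ‖((PowerSeries.coeff n f : ℚ) : ℝ)‖ * ‖x‖ ^ n ≤ M * ‖x‖ ^ n := by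
        refine mul_le_mul_of_nonneg_right ?_ (by positivity)
        rw [Real.norm_eq_abs]; exact hM n
    _ = M * |x| ^ n := by rw [Real.norm_eq_abs]

end

/-- The coefficient sequence `2^n α(2^{-n})`. -/
def muC (a : X) (n : ℕ) : ℚ := 2 ^ n * a (invPow n)

lemma coeff_hkSeries (a : X) (n : ℕ) :
    PowerSeries.coeff n (hkSeries a) = muC a n :=
  PowerSeries.coeff_mk _ _

lemma muC_tendsto {a : X} {mu : ℝ} (h : IsHKmu a mu) :
    Filter.Tendsto (fun n : ℕ => ((muC a n : ℚ) : ℝ)) Filter.atTop (nhds mu) := h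

end Statement8Aux


/-- Theorem 1.14: if `α` is convex Lipschitz with `α(0) = 0`, `α(1) = 1`, and `S_α` lies in a
finite extension `L` of `ℚ(w)` inside `ℚ((w))`, then `μ(α)` is algebraic over `ℚ` of degree
at most `[L : ℚ(w)]`. -/
theorem statement8 (α : X) (hconv : ConvexX α) (hlip : ∃ m : ℚ, LipschitzQ m α)
    (h0 : α ⟨0, zero_mem_dyadicI⟩ = 0) (h1 : α ⟨1, one_mem_dyadicI⟩ = 1)
    (L : Type) [Field L] [Algebra (RatFunc ℚ) L]
    (hL : FiniteDimensional (RatFunc ℚ) L)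
    (emb : L →ₐ[RatFunc ℚ] LaurentSeries ℚ)
    (hS : HahnSeries.ofPowerSeries ℤ ℚ (hkSeries α) ∈ Set.range emb)
    (mu : ℝ) (hmu : IsHKmu α mu) :
    IsAlgebraic ℚ mu ∧ (minpoly ℚ mu).natDegree ≤ Module.finrank (RatFunc ℚ) L := by
  classical
  obtain ⟨l, hl⟩ := hS
  have hint : IsIntegral (RatFunc ℚ) l := IsIntegral.of_finite _ _
  have hmonic : (minpoly (RatFunc ℚ) l).Monic := minpoly.monic hint
  set P : Polynomial (RatFunc ℚ) := minpoly (RatFunc ℚ) l with hPdef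
  set e : ℕ := P.natDegree with hedef
  have he : e ≤ Module.finrank (RatFunc ℚ) L := minpoly.natDegree_le l
  have haev : Polynomial.aeval l P = 0 := minpoly.aeval _ _
  have hexp : ∑ i ∈ Finset.range (e + 1), P.coeff i • l ^ i = 0 := by
    rw [← Polynomial.aeval_eq_sum_range]; exact haev
  set Sl : LaurentSeries ℚ := HahnSeries.ofPowerSeries ℤ ℚ (hkSeries α) with hSldef
  have hlaur : ∑ i ∈ Finset.range (e + 1),
      algebraMap (RatFunc ℚ) (LaurentSeries ℚ) (P.coeff i) * Sl ^ i = 0 := by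
    have h2 := congrArg emb hexp
    rw [map_sum, map_zero] at h2
    rw [← h2]
    refine Finset.sum_congr rfl fun i _ => ?_
    rw [map_smul, map_pow, hl, Algebra.smul_def]
  -- clear denominators
  set a : ℕ → Polynomial ℚ := fun i =>
    (P.coeff i).num * ∏ k ∈ (Finset.range (e + 1)).erase i, (P.coeff k).denom with hadef
  have key : ∀ i ∈ Finset.range (e + 1),
      algebraMap (Polynomial ℚ) (RatFunc ℚ) (a i)
        = P.coeff i * algebraMap (Polynomial ℚ) (RatFunc ℚ)
            (∏ k ∈ Finset.range (e + 1), (P.coeff k).denom) := by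
    intro i hi
    have hdne : algebraMap (Polynomial ℚ) (RatFunc ℚ) (P.coeff i).denom ≠ 0 :=
      RatFunc.algebraMap_ne_zero (RatFunc.denom_ne_zero _)
    have h1 : algebraMap (Polynomial ℚ) (RatFunc ℚ) (P.coeff i).num
        = P.coeff i * algebraMap (Polynomial ℚ) (RatFunc ℚ) (P.coeff i).denom := by
      exact (div_eq_iff hdne).mp (RatFunc.num_div_denom (P.coeff i))
    rw [← Finset.mul_prod_erase _ _ hi, hadef]
    simp only [map_mul, map_prod]
    rw [h1]
    ring
  have hlaur2 : ∑ i ∈ Finset.range (e + 1),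
      algebraMap (RatFunc ℚ) (LaurentSeries ℚ)
        (algebraMap (Polynomial ℚ) (RatFunc ℚ) (a i)) * Sl ^ i = 0 := by
    have h3 := congrArg
      (· * algebraMap (RatFunc ℚ) (LaurentSeries ℚ) (algebraMap (Polynomial ℚ) (RatFunc ℚ)
        (∏ k ∈ Finset.range (e + 1), (P.coeff k).denom))) hlaur
    simp only [Finset.sum_mul, zero_mul] at h3
    rw [← h3]
    refine Finset.sum_congr rfl fun i hi => ?_
    rw [key i hi, map_mul]
    ring
  have hcoe : ∀ p : Polynomial ℚ,
      algebraMap (RatFunc ℚ) (LaurentSeries ℚ) (algebraMap (Polynomial ℚ) (RatFunc ℚ) p)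
        = HahnSeries.ofPowerSeries ℤ ℚ (p : PowerSeries ℚ) := fun p =>
    (RatFunc.coe_coe p).symm
  have hform : ∑ i ∈ Finset.range (e + 1),
      ((a i : PowerSeries ℚ)) * (hkSeries α) ^ i = 0 := by
    apply HahnSeries.ofPowerSeries_injective (Γ := ℤ) (R := ℚ)
    rw [map_zero, map_sum, ← hlaur2]
    refine Finset.sum_congr rfl fun i hi => ?_
    rw [map_mul, map_pow, hcoe (a i), hSldef]
  -- a e ≠ 0
  have hcoeff_e : P.coeff e = 1 := hmonic.coeff_natDegree
  have hae_ne : a e ≠ 0 := by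
    rw [hadef]
    refine mul_ne_zero ?_ (Finset.prod_ne_zero_iff.mpr fun k _ => RatFunc.denom_ne_zero _)
    rw [hcoeff_e]
    exact RatFunc.num_ne_zero one_ne_zero
  -- analytic setup
  have hmu' := Statement8Aux.muC_tendsto hmu
  obtain ⟨M, hM⟩ := hmu'.abs.bddAbove_range
  have hMb : ∀ n : ℕ, |((Statement8Aux.muC α n : ℚ) : ℝ)| ≤ M := fun n => hM ⟨n, rfl⟩
  set Dser : PowerSeries ℚ := ((1 - Polynomial.X : Polynomial ℚ) : PowerSeries ℚ) * hkSeries α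
    with hDdef
  have h1X : ((1 - Polynomial.X : Polynomial ℚ) : PowerSeries ℚ) = 1 - PowerSeries.X := by
    rw [Polynomial.coe_sub, Polynomial.coe_one, Polynomial.coe_X]
  have hDcoeff0 : PowerSeries.coeff 0 Dser = Statement8Aux.muC α 0 := by
    rw [hDdef, h1X, sub_mul, one_mul, map_sub, PowerSeries.coeff_zero_X_mul, sub_zero,
      Statement8Aux.coeff_hkSeries]
  have hDcoeff : ∀ n : ℕ, PowerSeries.coeff (n + 1) Dser
      = Statement8Aux.muC α (n + 1) - Statement8Aux.muC α n := by
    intro n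
    rw [hDdef, h1X, sub_mul, one_mul, map_sub, PowerSeries.coeff_succ_X_mul,
      Statement8Aux.coeff_hkSeries, Statement8Aux.coeff_hkSeries]
  have hpartial : ∀ n : ℕ, ∑ i ∈ Finset.range (n + 1), PowerSeries.coeff i Dser
      = Statement8Aux.muC α n := by
    intro n
    induction n with
    | zero => simpa using hDcoeff0
    | succ k ih => rw [Finset.sum_range_succ, ih, hDcoeff k]; ring
  have habel_hyp : Filter.Tendsto
      (fun n : ℕ => ∑ i ∈ Finset.range n, ((PowerSeries.coeff i Dser : ℚ) : ℝ))
      Filter.atTop (nhds mu) := by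
    rw [← Filter.tendsto_add_atTop_iff_nat 1]
    refine hmu'.congr fun n => ?_
    rw [← hpartial n]
    push_cast
    rfl
  have habel : Filter.Tendsto (fun x : ℝ => Statement8Aux.psum Dser x)
      (nhdsWithin 1 (Set.Iio 1)) (nhds mu) :=
    Real.tendsto_tsum_powerSeries_nhdsWithin_lt habel_hyp
  -- the polynomials g, h and multiplicity v
  set g : ℕ → Polynomial ℚ := fun i => a i * (1 - Polynomial.X) ^ (e - i) with hgdef
  have hge : g e ≠ 0 := by
    rw [hgdef]
    simpa using hae_ne
  set J : Finset ℕ := (Finset.range (e + 1)).filter (fun i => g i ≠ 0) with hJdef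
  have hJne : J.Nonempty := ⟨e, by simp [hJdef, hge]⟩
  set v : ℕ := J.inf' hJne (fun i => (g i).rootMultiplicity 1) with hvdef
  obtain ⟨i₀, hi₀J, hvi₀⟩ := Finset.exists_mem_eq_inf' hJne (fun i => (g i).rootMultiplicity 1)
  have hmono : ((Polynomial.X - Polynomial.C (1 : ℚ)) ^ v).Monic :=
    (Polynomial.monic_X_sub_C (1 : ℚ)).pow v
  have hdvd : ∀ i ∈ Finset.range (e + 1), (Polynomial.X - Polynomial.C (1 : ℚ)) ^ v ∣ g i := by
    intro i hi
    by_cases h0 : g i = 0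
    · simp [h0]
    · have hiJ : i ∈ J := by simp [hJdef, hi, h0]
      have hle : v ≤ (g i).rootMultiplicity 1 := Finset.inf'_le _ hiJ
      exact dvd_trans (pow_dvd_pow _ hle) (Polynomial.pow_rootMultiplicity_dvd _ 1)
  set h : ℕ → Polynomial ℚ := fun i => g i /ₘ ((Polynomial.X - Polynomial.C 1) ^ v) with hhdef
  have hgh : ∀ i ∈ Finset.range (e + 1),
      g i = (Polynomial.X - Polynomial.C 1) ^ v * h i := by
    intro i hi
    conv_lhs => rw [← Polynomial.modByMonic_add_div (g i) ((Polynomial.X - Polynomial.C 1) ^ v)]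
    rw [(Polynomial.modByMonic_eq_zero_iff_dvd hmono).mpr (hdvd i hi), zero_add]
  have hi₀range : i₀ ∈ Finset.range (e + 1) := (Finset.mem_filter.mp hi₀J).1
  have hgi₀ : g i₀ ≠ 0 := (Finset.mem_filter.mp hi₀J).2
  have hh1 : (h i₀).eval 1 ≠ 0 := by
    intro heval
    have hdvd1 : (Polynomial.X - Polynomial.C (1 : ℚ)) ∣ h i₀ :=
      Polynomial.dvd_iff_isRoot.mpr heval
    have hd2 : (Polynomial.X - Polynomial.C (1 : ℚ)) ^ (v + 1) ∣ g i₀ := by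
      rw [hgh i₀ hi₀range, pow_succ]
      exact mul_dvd_mul_left _ hdvd1
    have hd3 := (Polynomial.le_rootMultiplicity_iff hgi₀).mpr hd2
    rw [← hvi₀] at hd3
    omega
  -- vanishing identity on (0,1)
  have hzero : ∀ x : ℝ, x ∈ Set.Ioo (0 : ℝ) 1 →
      ∑ i ∈ Finset.range (e + 1), (Polynomial.aeval x (h i))
        * (Statement8Aux.psum Dser x) ^ i = 0 := by
    intro x hx
    have hxabs : |x| < 1 := by
      rw [abs_lt]; exact ⟨by linarith [hx.1], hx.2⟩
    have hSgood : Statement8Aux.PSgood (hkSeries α) x := by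
      refine Statement8Aux.PSgood_of_bounded (M := M) (fun n => ?_) hxabs
      rw [Statement8Aux.coeff_hkSeries]
      exact hMb n
    have hrel : ∑ i ∈ Finset.range (e + 1), (Polynomial.aeval x (a i))
        * (Statement8Aux.psum (hkSeries α) x) ^ i = 0 := by
      have hps := Statement8Aux.psum_finsum (N := e + 1)
        (fun i => ((a i : PowerSeries ℚ)) * (hkSeries α) ^ i) x
        (fun i _ => (Statement8Aux.PSgood_poly (a i) x).mul (hSgood.pow i))
      rw [hform, Statement8Aux.psum_zero] at hps
      calc ∑ i ∈ Finset.range (e + 1), (Polynomial.aeval x (a i))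
            * (Statement8Aux.psum (hkSeries α) x) ^ i
          = ∑ i ∈ Finset.range (e + 1),
              Statement8Aux.psum (((a i : PowerSeries ℚ)) * (hkSeries α) ^ i) x := by
            refine Finset.sum_congr rfl fun i _ => ?_
            rw [Statement8Aux.psum_mul (Statement8Aux.PSgood_poly (a i) x) (hSgood.pow i),
              Statement8Aux.psum_poly, Statement8Aux.psum_pow hSgood]
        _ = 0 := hps.symm
    have ht : Statement8Aux.psum Dser x = (1 - x) * Statement8Aux.psum (hkSeries α) x := by
      rw [hDdef, Statement8Aux.psum_mul (Statement8Aux.PSgood_poly _ x) hSgood,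
        Statement8Aux.psum_poly]
      simp
    have hmulrel : ∑ i ∈ Finset.range (e + 1), (Polynomial.aeval x (g i))
        * (Statement8Aux.psum Dser x) ^ i = 0 := by
      have hterm : ∀ i ∈ Finset.range (e + 1), (Polynomial.aeval x (g i))
          * (Statement8Aux.psum Dser x) ^ i
          = (1 - x) ^ e * ((Polynomial.aeval x (a i))
            * (Statement8Aux.psum (hkSeries α) x) ^ i) := by
        intro i hi
        have hie : i ≤ e := Nat.lt_succ_iff.mp (Finset.mem_range.mp hi)
        rw [hgdef]
        simp only [map_mul, map_pow, map_sub, map_one, Polynomial.aeval_X]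
        rw [ht, mul_pow]
        calc Polynomial.aeval x (a i) * (1 - x) ^ (e - i)
              * ((1 - x) ^ i * Statement8Aux.psum (hkSeries α) x ^ i)
            = ((1 - x) ^ (e - i) * (1 - x) ^ i)
              * (Polynomial.aeval x (a i) * Statement8Aux.psum (hkSeries α) x ^ i) := by ring
          _ = (1 - x) ^ e * (Polynomial.aeval x (a i)
              * Statement8Aux.psum (hkSeries α) x ^ i) := by
              rw [← pow_add, Nat.sub_add_cancel hie]
      rw [Finset.sum_congr rfl hterm, ← Finset.mul_sum, hrel, mul_zero]
    have hxne : (x - 1 : ℝ) ≠ 0 := sub_ne_zero.mpr (ne_of_lt hx.2)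
    have hfinal : (x - 1) ^ v * (∑ i ∈ Finset.range (e + 1),
        (Polynomial.aeval x (h i)) * (Statement8Aux.psum Dser x) ^ i) = 0 := by
      rw [Finset.mul_sum, ← hmulrel]
      refine Finset.sum_congr rfl fun i hi => ?_
      rw [hgh i hi]
      simp only [map_mul, map_pow, map_sub, Polynomial.aeval_X, Polynomial.aeval_C]
      push_cast
      ring
    exact (mul_eq_zero.mp hfinal).resolve_left (pow_ne_zero v hxne)
  -- take the limit x → 1⁻
  have hlim : Filter.Tendsto (fun x : ℝ => ∑ i ∈ Finset.range (e + 1),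
      (Polynomial.aeval x (h i)) * (Statement8Aux.psum Dser x) ^ i)
      (nhdsWithin 1 (Set.Iio 1))
      (nhds (∑ i ∈ Finset.range (e + 1), (Polynomial.aeval (1 : ℝ) (h i)) * mu ^ i)) := by
    refine tendsto_finset_sum _ fun i _ => Filter.Tendsto.mul ?_ (habel.pow i)
    exact ((h i).continuous_aeval.tendsto 1).mono_left nhdsWithin_le_nhds
  have hev : ∀ᶠ x in nhdsWithin (1 : ℝ) (Set.Iio 1),
      (fun x : ℝ => ∑ i ∈ Finset.range (e + 1),
        (Polynomial.aeval x (h i)) * (Statement8Aux.psum Dser x) ^ i) x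
        = (fun _ : ℝ => (0 : ℝ)) x := by
    have h01 : Set.Ioi (0 : ℝ) ∈ nhds (1 : ℝ) := isOpen_Ioi.mem_nhds (by norm_num)
    filter_upwards [mem_nhdsWithin_of_mem_nhds h01, self_mem_nhdsWithin] with x hx0 hx1
    exact hzero x ⟨hx0, hx1⟩
  have hsum0 : ∑ i ∈ Finset.range (e + 1), (Polynomial.aeval (1 : ℝ) (h i)) * mu ^ i = 0 :=
    tendsto_nhds_unique (hlim.congr' hev) tendsto_const_nhds
  -- the annihilating polynomial
  set Hp : Polynomial ℚ := ∑ i ∈ Finset.range (e + 1),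
    Polynomial.C ((h i).eval 1) * Polynomial.X ^ i with hHpdef
  have heval1 : ∀ i : ℕ, Polynomial.aeval (1 : ℝ) (h i) = (((h i).eval 1 : ℚ) : ℝ) := by
    intro i
    rw [Polynomial.aeval_def, Polynomial.eval₂_eq_eval_map, Polynomial.eval_one_map]
    rfl
  have hHne : Hp ≠ 0 := by
    intro h0
    have hc : Hp.coeff i₀ = 0 := by rw [h0]; simp
    rw [hHpdef, Polynomial.finset_sum_coeff] at hc
    simp only [Polynomial.coeff_C_mul, Polynomial.coeff_X_pow, mul_ite, mul_one, mul_zero,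
      Finset.sum_ite_eq, hi₀range, if_true] at hc
    exact hh1 hc
  have hHdeg : Hp.natDegree ≤ e := by
    rw [hHpdef]
    refine Polynomial.natDegree_sum_le_of_forall_le _ _ fun i hi => ?_
    refine le_trans (Polynomial.natDegree_C_mul_le _ _) ?_
    refine le_trans (Polynomial.natDegree_X_pow_le i) ?_
    exact Nat.lt_succ_iff.mp (Finset.mem_range.mp hi)
  have haevH : Polynomial.aeval (mu : ℝ) Hp = 0 := by
    rw [hHpdef, map_sum, ← hsum0]
    refine Finset.sum_congr rfl fun i _ => ?_
    rw [map_mul, map_pow, Polynomial.aeval_X, Polynomial.aeval_C, heval1 i]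
    rfl
  refine ⟨⟨Hp, hHne, haevH⟩, ?_⟩
  calc (minpoly ℚ mu).natDegree
      ≤ Hp.natDegree := Polynomial.natDegree_le_of_dvd (minpoly.dvd ℚ mu haevH) hHne
    _ ≤ e := hHdeg
    _ ≤ Module.finrank (RatFunc ℚ) L := he


end
end
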